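/- arXiv:math/9503214 — 3 statements merged into one kernel-verified Lean document; each statement's English description precedes it below -/
import Mathlib

section
/- Let V be a closed convex subset of ℝ with γ₁(V) ≥ 1/2, let θ satisfy γ₁([−θ/2, θ/2]) = 1/2, and let L = dℤ be a lattice in ℝ with 0 < d ≤ θ. Then for every a ∈ ℝ, (a + L) ∩ V ≠ ∅. -/
open MeasureTheory Real

/-- Standard Gaussian measure on ℝⁿ (as Euclidean space). -/
noncomputable def stdGaussian (n : ℕ) : Measure (EuclideanSpace ℝ (Fin n)) :=
  volume.withDensity fun x => ENNReal.ofReal ((2 * π) ^ (-(n : ℝ) / 2) * Real.exp (-‖x‖ ^ 2 / 2))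

/-- Standard Gaussian measure on ℝ. -/
noncomputable def gaussian1 : Measure ℝ :=
  volume.withDensity fun x => ENNReal.ofReal ((2 * π) ^ (-(1 : ℝ) / 2) * Real.exp (-x ^ 2 / 2))

noncomputable def phi1 (x : ℝ) : ℝ := (2 * π) ^ (-(1 : ℝ) / 2) * Real.exp (-x ^ 2 / 2)

lemma phi1_cont : Continuous phi1 := by
  unfold phi1; fun_prop

lemma phi1_pos (x : ℝ) : 0 < phi1 x := by
  unfold phi1
  have : (0:ℝ) < 2 * π := by positivity
  positivity

lemma phi1_even (x : ℝ) : phi1 (-x) = phi1 x := by simp [phi1]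

lemma gauss_Icc {s t : ℝ} (hst : s ≤ t) :
    gaussian1 (Set.Icc s t) = ENNReal.ofReal (∫ x in s..t, phi1 x) := by
  have h1 : gaussian1 (Set.Icc s t) = ∫⁻ x in Set.Icc s t, ENNReal.ofReal (phi1 x) ∂volume := by
    rw [gaussian1, withDensity_apply _ measurableSet_Icc]; rfl
  rw [h1, intervalIntegral.integral_of_le hst, ← integral_Icc_eq_integral_Ioc,
    ← ofReal_integral_eq_lintegral_ofReal phi1_cont.integrableOn_Icc
      (ae_of_all _ fun x => (phi1_pos x).le)]

noncomputable def Fg (x : ℝ) : ℝ := ∫ t in (0:ℝ)..x, phi1 t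

lemma Fg_hasDeriv (x : ℝ) : HasDerivAt Fg (phi1 x) x :=
  (intervalIntegral.integral_hasStrictDerivAt_right
    (phi1_cont.intervalIntegrable _ _) (phi1_cont.stronglyMeasurableAtFilter _ _)
    phi1_cont.continuousAt).hasDerivAt

lemma Fg_odd (x : ℝ) : Fg (-x) = -Fg x := by
  have h : ∫ t in (0:ℝ)..(-x), phi1 (-t) = ∫ t in (-(-x))..(-(0:ℝ)), phi1 t :=
    intervalIntegral.integral_comp_neg phi1
  simp only [phi1_even, neg_neg, neg_zero] at h
  rw [Fg, Fg, h, intervalIntegral.integral_symm]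

lemma g_hasDeriv (h m : ℝ) :
    HasDerivAt (fun m => Fg (m + h) - Fg (m - h)) (phi1 (m + h) - phi1 (m - h)) m := by
  have h1 := (Fg_hasDeriv (m + h)).comp m ((hasDerivAt_id m).add_const h)
  have h2 := (Fg_hasDeriv (m - h)).comp m ((hasDerivAt_id m).sub_const h)
  have h3 := h1.sub h2
  simp only [mul_one] at h3
  exact h3

lemma g_anti (h : ℝ) (hh : 0 ≤ h) :
    AntitoneOn (fun m => Fg (m + h) - Fg (m - h)) (Set.Ici 0) := by
  apply antitoneOn_of_deriv_nonpos (convex_Ici 0)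
  · exact (Differentiable.continuous fun x => (g_hasDeriv h x).differentiableAt).continuousOn
  · exact fun x _ => (g_hasDeriv h x).differentiableAt.differentiableWithinAt
  · intro x hx
    rw [interior_Ici] at hx
    rw [(g_hasDeriv h x).deriv]
    have h1 : (x - h) ^ 2 ≤ (x + h) ^ 2 := by nlinarith [(Set.mem_Ioi.1 hx).le]
    have h2 : Real.exp (-(x + h) ^ 2 / 2) ≤ Real.exp (-(x - h) ^ 2 / 2) :=
      Real.exp_le_exp.2 (by linarith)
    have h3 : (0:ℝ) ≤ (2 * π) ^ (-(1 : ℝ) / 2) := by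
      have : (0:ℝ) < 2 * π := by positivity
      positivity
    have := mul_le_mul_of_nonneg_left h2 h3
    simp only [phi1]
    linarith

lemma g_even (h m : ℝ) : Fg (-m + h) - Fg (-m - h) = Fg (m + h) - Fg (m - h) := by
  have e1 : -m + h = -(m - h) := by ring
  have e2 : -m - h = -(m + h) := by ring
  rw [e1, e2, Fg_odd, Fg_odd]
  ring

lemma centered_max (h m : ℝ) (hh : 0 ≤ h) :
    ∫ x in (m - h)..(m + h), phi1 x ≤ ∫ x in (-h)..h, phi1 x := by
  have hrep : ∀ c : ℝ, ∫ x in (c - h)..(c + h), phi1 x = Fg (c + h) - Fg (c - h) := by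
    intro c
    rw [Fg, Fg, intervalIntegral.integral_interval_sub_left
      (phi1_cont.intervalIntegrable _ _) (phi1_cont.intervalIntegrable _ _)]
  have key : Fg (m + h) - Fg (m - h) ≤ Fg (0 + h) - Fg (0 - h) := by
    rcases le_total 0 m with hm | hm
    · exact g_anti h hh (Set.mem_Ici.2 le_rfl) (Set.mem_Ici.2 hm) hm
    · rw [← g_even h m]
      exact g_anti h hh (Set.mem_Ici.2 le_rfl) (Set.mem_Ici.2 (neg_nonneg.2 hm)) (neg_nonneg.2 hm)
  calc ∫ x in (m - h)..(m + h), phi1 x = Fg (m + h) - Fg (m - h) := hrep m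
    _ ≤ Fg (0 + h) - Fg (0 - h) := key
    _ = ∫ x in (0 - h)..(0 + h), phi1 x := (hrep 0).symm
    _ = ∫ x in (-h)..h, phi1 x := by norm_num

lemma gap_strict {h H : ℝ} (hh : 0 ≤ h) (hH : h < H) :
    ∫ x in (-h)..h, phi1 x < ∫ x in (-H)..H, phi1 x := by
  have i1 : ∫ x in (-H)..h, phi1 x = (∫ x in (-H)..(-h), phi1 x) + ∫ x in (-h)..h, phi1 x :=
    (intervalIntegral.integral_add_adjacent_intervals (phi1_cont.intervalIntegrable _ _)
      (phi1_cont.intervalIntegrable _ _)).symm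
  have i2 : ∫ x in (-H)..H, phi1 x = (∫ x in (-H)..h, phi1 x) + ∫ x in h..H, phi1 x :=
    (intervalIntegral.integral_add_adjacent_intervals (phi1_cont.intervalIntegrable _ _)
      (phi1_cont.intervalIntegrable _ _)).symm
  have p1 : 0 < ∫ x in (-H)..(-h), phi1 x :=
    intervalIntegral.intervalIntegral_pos_of_pos (phi1_cont.intervalIntegrable _ _)
      phi1_pos (by linarith)
  have p2 : 0 < ∫ x in h..H, phi1 x :=
    intervalIntegral.intervalIntegral_pos_of_pos (phi1_cont.intervalIntegrable _ _)
      phi1_pos hH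
  rw [i2, i1]
  linarith

theorem stmt_6 (V : Set ℝ) (hVclosed : IsClosed V) (hVconv : Convex ℝ V)
    (hV : gaussian1 V ≥ 1 / 2) (θ d : ℝ) (hθpos : 0 < θ)
    (hθ : gaussian1 (Set.Icc (-(θ / 2)) (θ / 2)) = 1 / 2)
    (hd : 0 < d) (hdθ : d ≤ θ) (a : ℝ) :
    ∃ k : ℤ, a + d * k ∈ V := by
  have hVne : V.Nonempty := by
    by_contra hne
    rw [Set.not_nonempty_iff_eq_empty] at hne
    rw [hne, measure_empty] at hV
    simp at hV
  have hOC : V.OrdConnected := hVconv.ordConnected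
  by_cases hbb : BddBelow V
  · by_cases hba : BddAbove V
    · -- bounded case
      have hpV : sInf V ∈ V := hVclosed.csInf_mem hVne hbb
      have hqV' : sSup V ∈ V := hVclosed.csSup_mem hVne hba
      obtain ⟨p, hpV0⟩ : ∃ p, p = sInf V := ⟨_, rfl⟩
      obtain ⟨q, hqV0⟩ : ∃ q, q = sSup V := ⟨_, rfl⟩
      rw [← hpV0] at hpV
      rw [← hqV0] at hqV'
      have hqV := hqV'
      have hpq : p ≤ q := by rw [hpV0, hqV0]; exact le_csSup hba (hpV0 ▸ hpV)
      have hsub : V ⊆ Set.Icc p q := fun x hx =>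
        ⟨hpV0 ▸ csInf_le hbb hx, hqV0 ▸ le_csSup hba hx⟩
      have hlen : θ ≤ q - p := by
        by_contra hlt
        push_neg at hlt
        have h2 : gaussian1 V ≤ gaussian1 (Set.Icc p q) := measure_mono hsub
        have key : gaussian1 (Set.Icc p q) < 1 / 2 := by
          rw [gauss_Icc hpq, ← hθ, gauss_Icc (by linarith)]
          have hhalf : (0:ℝ) ≤ (q - p) / 2 := by linarith
          have e1 : (p + q) / 2 - (q - p) / 2 = p := by ring
          have e2 : (p + q) / 2 + (q - p) / 2 = q := by ring
          have hle := centered_max ((q - p) / 2) ((p + q) / 2) hhalf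
          rw [e1, e2] at hle
          have hlt2 : ∫ x in (-((q - p) / 2))..((q - p) / 2), phi1 x
              < ∫ x in (-(θ / 2))..(θ / 2), phi1 x := gap_strict hhalf (by linarith)
          have hpos : 0 < ∫ x in (-(θ / 2))..(θ / 2), phi1 x :=
            intervalIntegral.intervalIntegral_pos_of_pos (phi1_cont.intervalIntegrable _ _)
              phi1_pos (by linarith)
          exact (ENNReal.ofReal_lt_ofReal_iff hpos).2 (lt_of_le_of_lt hle hlt2)
        exact absurd (lt_of_le_of_lt (le_trans hV h2) key) (lt_irrefl _)
      refine ⟨⌈(p - a) / d⌉, hOC.out hpV hqV ?_⟩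
      have hc1 : (p - a) / d ≤ (⌈(p - a) / d⌉ : ℝ) := Int.le_ceil _
      have hc2 : ((⌈(p - a) / d⌉ : ℤ) : ℝ) < (p - a) / d + 1 := Int.ceil_lt_add_one _
      have hm1 : p - a ≤ d * (⌈(p - a) / d⌉ : ℝ) := by
        rw [div_le_iff₀ hd] at hc1; linarith
      have hm2 : d * ((⌈(p - a) / d⌉ : ℤ) : ℝ) < p - a + d := by
        have := mul_lt_mul_of_pos_left hc2 hd
        have e : d * ((p - a) / d + 1) = p - a + d := by field_simp
        linarith [e ▸ this]
      constructor
      · linarith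
      · linarith
    · -- unbounded above
      obtain ⟨x, hxV⟩ := hVne
      obtain ⟨k, hk⟩ := exists_int_gt ((x - a) / d)
      have hk' : x ≤ a + d * k := by
        rw [div_lt_iff₀ hd] at hk
        nlinarith
      have hy : ∃ y ∈ V, a + d * k ≤ y := by
        by_contra hcon
        push_neg at hcon
        exact hba ⟨a + d * k, fun y hy => (hcon y hy).le⟩
      obtain ⟨y, hyV, hyk⟩ := hy
      exact ⟨k, hOC.out hxV hyV ⟨hk', hyk⟩⟩
  · -- unbounded below
    obtain ⟨x, hxV⟩ := hVne
    obtain ⟨k, hk⟩ := exists_int_lt ((x - a) / d)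
    have hk' : a + d * k ≤ x := by
      rw [lt_div_iff₀ hd] at hk
      nlinarith
    have hy : ∃ y ∈ V, y ≤ a + d * k := by
      by_contra hcon
      push_neg at hcon
      exact hbb ⟨a + d * k, fun y hy => (hcon y hy).le⟩
    obtain ⟨y, hyV, hyk⟩ := hy
    exact ⟨k, hOC.out hyV hxV ⟨hyk, hk'⟩⟩
end

section
/- There is a constant C > 0 such that for all n ≥ 2, for every lattice L in ℝⁿ, μ(L, Kₙ) ≤ C √(log n) · λₙ(L, Bₙ), where Kₙ = [−1,1]ⁿ is the unit cube; i.e., α(Bₙ, Kₙ) = O(√(log n)) as n → ∞. -/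
open MeasureTheory Real

open Pointwise

/-- The n-th minimum of a lattice `L` with respect to a set `U`. -/
noncomputable def nthMin (n : ℕ) (L : AddSubgroup (EuclideanSpace ℝ (Fin n)))
    (U : Set (EuclideanSpace ℝ (Fin n))) : ℝ :=
  sInf {r : ℝ | 0 < r ∧
    Module.finrank ℝ (Submodule.span ℝ ((L : Set (EuclideanSpace ℝ (Fin n))) ∩ r • U)) = n}

/-- The covering radius of a lattice `L` with respect to a set `V`. -/
noncomputable def covRad (n : ℕ) (L : AddSubgroup (EuclideanSpace ℝ (Fin n)))
    (V : Set (EuclideanSpace ℝ (Fin n))) : ℝ :=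
  sInf {r : ℝ | 0 < r ∧ (L : Set (EuclideanSpace ℝ (Fin n))) + r • V = Set.univ}

lemma exp_neg_le_quad {y : ℝ} (hy : 0 ≤ y) : Real.exp (-y) ≤ 1 - y + y^2/2 := by
  set f : ℝ → ℝ := fun t => 1 - t + t^2/2 - Real.exp (-t) with hf
  have hderiv : ∀ t : ℝ, HasDerivAt f (-1 + t + Real.exp (-t)) t := by
    intro t
    have h1 : HasDerivAt (fun t : ℝ => Real.exp (-t)) (-Real.exp (-t)) t := by
      have h := (Real.hasDerivAt_exp (-t)).comp t ((hasDerivAt_id t).neg)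
      exact h.congr_deriv (by ring)
    have h2 : HasDerivAt (fun t : ℝ => 1 - t + t^2/2) (-1 + t) t := by
      have : HasDerivAt (fun t : ℝ => t^2/2) t t := by
        simpa using ((hasDerivAt_pow 2 t).div_const 2)
      have h := ((hasDerivAt_const t (1:ℝ)).sub (hasDerivAt_id t)).add this
      exact h.congr_deriv (by ring)
    exact (h2.sub h1).congr_deriv (by ring)
  have hmono : MonotoneOn f (Set.Ici (0:ℝ)) := by
    apply monotoneOn_of_deriv_nonneg (convex_Ici 0)
    · exact Continuous.continuousOn (by continuity)
    · intro t ht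
      exact (hderiv t).differentiableAt.differentiableWithinAt
    · intro t ht
      rw [(hderiv t).deriv]
      have := Real.add_one_le_exp (-t)
      nlinarith
  have h0 : f 0 = 0 := by simp [hf]
  have := hmono (Set.self_mem_Ici) (Set.mem_Ici.2 hy) hy
  rw [h0] at this
  simpa [hf, sub_nonneg] using this

lemma two_point_mgf {c y : ℝ} (h0 : 0 ≤ c) (h1 : c ≤ 1) :
    (1-c) * Real.exp (c*y) + c * Real.exp ((c-1)*y) ≤ Real.exp (y^2/2) := by
  have main : ∀ c y : ℝ, 0 ≤ c → c ≤ 1 → 0 ≤ y →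
      (1-c) * Real.exp (c*y) + c * Real.exp ((c-1)*y) ≤ Real.exp (y^2/2) := by
    intro c y h0 h1 hy
    have e1 : (1-c) * Real.exp (c*y) + c * Real.exp ((c-1)*y)
        = Real.exp (c*y) * (1 + c * (Real.exp (-y) - 1)) := by
      rw [show (c-1)*y = c*y + (-y) by ring, Real.exp_add]; ring
    have e2 : (1:ℝ) + c * (Real.exp (-y) - 1) ≤ Real.exp (c * (Real.exp (-y) - 1)) := by
      simpa [add_comm] using Real.add_one_le_exp (c * (Real.exp (-y) - 1))
    have h3 : Real.exp (c*y) * (1 + c * (Real.exp (-y) - 1))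
        ≤ Real.exp (c*y) * Real.exp (c * (Real.exp (-y) - 1)) := by
      exact mul_le_mul_of_nonneg_left e2 (Real.exp_pos _).le
    have e4 : Real.exp (c*y) * Real.exp (c * (Real.exp (-y) - 1))
        = Real.exp (c * (y + Real.exp (-y) - 1)) := by
      rw [← Real.exp_add]; ring_nf
    have h5 : 0 ≤ y + Real.exp (-y) - 1 := by
      have := Real.add_one_le_exp (-y); linarith
    have h6 : c * (y + Real.exp (-y) - 1) ≤ y + Real.exp (-y) - 1 := by
      nlinarith
    have h7 : y + Real.exp (-y) - 1 ≤ y^2/2 := by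
      have := exp_neg_le_quad hy; linarith
    calc (1-c) * Real.exp (c*y) + c * Real.exp ((c-1)*y)
        ≤ Real.exp (c * (y + Real.exp (-y) - 1)) := by rw [e1, ← e4]; exact h3
      _ ≤ Real.exp (y^2/2) := Real.exp_le_exp.2 (h6.trans h7)
  rcases le_or_gt 0 y with hy | hy
  · exact main c y h0 h1 hy
  · have := main (1-c) (-y) (by linarith) (by linarith) (by linarith)
    have e : (1-(1-c)) * Real.exp ((1-c)*(-y)) + (1-c) * Real.exp (((1-c)-1)*(-y))
        = c * Real.exp ((c-1)*y) + (1-c) * Real.exp (c*y) := by ring_nf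
    rw [e] at this
    have e2 : (-y)^2/2 = y^2/2 := by ring
    rw [e2] at this; linarith

noncomputable def gs (n : ℕ) (v : Fin n → EuclideanSpace ℝ (Fin n)) :
    Fin n → EuclideanSpace ℝ (Fin n) :=
  @InnerProductSpace.gramSchmidt ℝ (EuclideanSpace ℝ (Fin n)) _ _ _ (Fin n) _ _
    (inferInstanceAs (WellFoundedLT (Fin n))) v

lemma gs_orthogonal (n : ℕ) (v : Fin n → EuclideanSpace ℝ (Fin n)) {i j : Fin n} (h : i ≠ j) :
    inner (𝕜 := ℝ) (gs n v i) (gs n v j) = 0 :=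
  @InnerProductSpace.gramSchmidt_orthogonal ℝ _ _ _ _ (Fin n) _ _ (inferInstanceAs (WellFoundedLT (Fin n))) v i j h

lemma gs_span_Iio (n : ℕ) (v : Fin n → EuclideanSpace ℝ (Fin n)) (c : Fin n) :
    Submodule.span ℝ (gs n v '' Set.Iio c) = Submodule.span ℝ (v '' Set.Iio c) :=
  @InnerProductSpace.span_gramSchmidt_Iio ℝ _ _ _ _ (Fin n) _ _ (inferInstanceAs (WellFoundedLT (Fin n))) v c

lemma gs_def (n : ℕ) (v : Fin n → EuclideanSpace ℝ (Fin n)) (c : Fin n) :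
    gs n v c = v c - ∑ i ∈ Finset.Iio c,
      (Submodule.orthogonalProjection (ℝ ∙ gs n v i) (v c) : EuclideanSpace ℝ (Fin n)) :=
  @InnerProductSpace.gramSchmidt_def ℝ _ _ _ _ (Fin n) _ _ (inferInstanceAs (WellFoundedLT (Fin n))) v c

lemma gs_ne_zero (n : ℕ) (v : Fin n → EuclideanSpace ℝ (Fin n))
    (h : LinearIndependent ℝ v) (i : Fin n) : gs n v i ≠ 0 :=
  @InnerProductSpace.gramSchmidt_ne_zero ℝ _ _ _ _ (Fin n) _ _ (inferInstanceAs (WellFoundedLT (Fin n))) v i h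

lemma key_induction (n : ℕ) (L : AddSubgroup (EuclideanSpace ℝ (Fin n)))
    (v : Fin n → EuclideanSpace ℝ (Fin n)) (hvL : ∀ i, v i ∈ L) :
    ∀ (k : ℕ), k ≤ n →
    ∀ t ∈ Submodule.span ℝ (v '' {i : Fin n | (i:ℕ) < k}),
    ∃ l : List (ℝ × EuclideanSpace ℝ (Fin n)),
      (∀ p ∈ l, 0 ≤ p.1 ∧ p.2 ∈ L) ∧
      (l.map Prod.fst).sum = 1 ∧
      ∀ φ : EuclideanSpace ℝ (Fin n) →ₗ[ℝ] ℝ,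
        (l.map fun p => p.1 * Real.exp (φ (t - p.2))).sum ≤
          Real.exp ((1/2) * ∑ i ∈ Finset.univ.filter (fun i : Fin n => (i:ℕ) < k),
            (φ (gs n v i))^2) := by
  intro k
  induction k with
  | zero =>
    intro _ t ht
    have he : {i : Fin n | (i:ℕ) < 0} = (∅ : Set (Fin n)) := by
      ext i; simp
    rw [he, Set.image_empty, Submodule.span_empty, Submodule.mem_bot] at ht
    refine ⟨[(1, 0)], ?_, by simp, ?_⟩
    · rintro p hp
      simp only [List.mem_singleton] at hp
      subst hp
      exact ⟨zero_le_one, L.zero_mem⟩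
    · intro φ
      have hf : Finset.univ.filter (fun i : Fin n => (i:ℕ) < 0) = ∅ := by
        apply Finset.filter_false_of_mem; intro i _; simp
      simp [ht, hf]
  | succ k ih =>
    intro hk t ht
    have hkn : k < n := hk
    set ik : Fin n := ⟨k, hkn⟩ with hik
    set g : Fin n → EuclideanSpace ℝ (Fin n) := gs n v with hg
    -- rewrite the image set as an insert
    have himg : v '' {i : Fin n | (i:ℕ) < k+1} = insert (v ik) (v '' {i : Fin n | (i:ℕ) < k}) := by
      rw [show {i : Fin n | (i:ℕ) < k+1} = insert ik {i : Fin n | (i:ℕ) < k} by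
        ext i
        simp only [Set.mem_setOf_eq, Set.mem_insert_iff, Nat.lt_succ_iff_lt_or_eq]
        constructor
        · rintro (h | h)
          · exact Or.inr h
          · exact Or.inl (Fin.ext h)
        · rintro (h | h)
          · exact Or.inr (by rw [h])
          · exact Or.inl h]
      exact Set.image_insert_eq
    rw [himg] at ht
    obtain ⟨a, z, hz, hta⟩ := Submodule.mem_span_insert.1 ht
    -- the Gram-Schmidt tail
    set q : EuclideanSpace ℝ (Fin n) := v ik - g ik with hq
    have hIio : Set.Iio ik = {i : Fin n | (i:ℕ) < k} := by
      ext i; exact Fin.lt_def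
    have hqspan : q ∈ Submodule.span ℝ (v '' {i : Fin n | (i:ℕ) < k}) := by
      rw [← hIio, ← gs_span_Iio n v ik]
      have hdef := gs_def n v ik
      have : q = ∑ i ∈ Finset.Iio ik,
          (Submodule.orthogonalProjection (ℝ ∙ g i) (v ik) : EuclideanSpace ℝ (Fin n)) := by
        rw [hq, hg]
        rw [hdef]
        abel
      rw [this]
      apply Submodule.sum_mem
      intro i hi
      have hmem : (Submodule.orthogonalProjection (ℝ ∙ g i) (v ik) : EuclideanSpace ℝ (Fin n)) ∈
          (ℝ ∙ g i) := SetLike.coe_mem _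
      have hle : (ℝ ∙ g i) ≤ Submodule.span ℝ (g '' Set.Iio ik) := by
        rw [Submodule.span_singleton_le_iff_mem]
        exact Submodule.subset_span ⟨i, Finset.mem_Iio.1 hi, rfl⟩
      exact hle hmem
    -- set up rounding
    set c : ℝ := Int.fract a with hc
    have hc0 : 0 ≤ c := Int.fract_nonneg a
    have hc1 : c < 1 := Int.fract_lt_one a
    set z₀ : ℤ := ⌊a⌋ with hz₀
    have haz : a = (z₀ : ℝ) + c := by
      rw [hc, hz₀]; have := Int.floor_add_fract a; linarith
    set x₀ : EuclideanSpace ℝ (Fin n) := (z₀ : ℝ) • v ik with hx₀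
    set x₁ : EuclideanSpace ℝ (Fin n) := ((z₀ : ℝ) + 1) • v ik with hx₁
    have hx₀L : x₀ ∈ L := by
      rw [hx₀, Int.cast_smul_eq_zsmul]
      exact L.zsmul_mem (hvL ik) _
    have hx₁L : x₁ ∈ L := by
      have : x₁ = ((z₀ + 1 : ℤ) : ℝ) • v ik := by rw [hx₁]; push_cast; ring_nf
      rw [this, Int.cast_smul_eq_zsmul]
      exact L.zsmul_mem (hvL ik) _
    -- the two residual targets
    set t₀ : EuclideanSpace ℝ (Fin n) := c • q + z with ht₀
    set t₁ : EuclideanSpace ℝ (Fin n) := (c - 1) • q + z with ht₁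
    have ht₀span : t₀ ∈ Submodule.span ℝ (v '' {i : Fin n | (i:ℕ) < k}) :=
      Submodule.add_mem _ (Submodule.smul_mem _ _ hqspan) hz
    have ht₁span : t₁ ∈ Submodule.span ℝ (v '' {i : Fin n | (i:ℕ) < k}) :=
      Submodule.add_mem _ (Submodule.smul_mem _ _ hqspan) hz
    -- the decomposition identities
    have hvik : v ik = g ik + q := by rw [hq]; abel
    have hdec₀ : t - x₀ = c • g ik + t₀ := by
      rw [hta, hx₀, ht₀, haz, hvik]
      module
    have hdec₁ : t - x₁ = (c - 1) • g ik + t₁ := by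
      rw [hta, hx₁, ht₁, haz, hvik]
      module
    obtain ⟨l₀, hl₀mem, hl₀sum, hl₀φ⟩ := ih (le_of_lt hkn) t₀ ht₀span
    obtain ⟨l₁, hl₁mem, hl₁sum, hl₁φ⟩ := ih (le_of_lt hkn) t₁ ht₁span
    refine ⟨(l₀.map fun p => ((1-c)*p.1, x₀+p.2)) ++ (l₁.map fun p => (c*p.1, x₁+p.2)),
      ?_, ?_, ?_⟩
    · intro p hp
      rcases List.mem_append.1 hp with hp | hp <;>
        obtain ⟨p', hp', rfl⟩ := List.mem_map.1 hp
      · exact ⟨mul_nonneg (by linarith) (hl₀mem p' hp').1, L.add_mem hx₀L (hl₀mem p' hp').2⟩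
      · exact ⟨mul_nonneg hc0 (hl₁mem p' hp').1, L.add_mem hx₁L (hl₁mem p' hp').2⟩
    · rw [List.map_append, List.sum_append, List.map_map, List.map_map]
      have e0 : ((Prod.fst ∘ fun p : ℝ × EuclideanSpace ℝ (Fin n) => ((1-c)*p.1, x₀+p.2))) =
          fun p : ℝ × EuclideanSpace ℝ (Fin n) => (1-c) * p.1 := rfl
      have e1 : ((Prod.fst ∘ fun p : ℝ × EuclideanSpace ℝ (Fin n) => (c*p.1, x₁+p.2))) =
          fun p : ℝ × EuclideanSpace ℝ (Fin n) => c * p.1 := rfl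
      rw [e0, e1, List.sum_map_mul_left, List.sum_map_mul_left, hl₀sum, hl₁sum]
      ring
    · intro φ
      set y : ℝ := φ (g ik) with hy
      -- Finset filter splitting
      have hfins : Finset.univ.filter (fun i : Fin n => (i:ℕ) < k+1) =
          insert ik (Finset.univ.filter (fun i : Fin n => (i:ℕ) < k)) := by
        ext i
        simp only [Finset.mem_filter, Finset.mem_univ, true_and, Finset.mem_insert,
          Nat.lt_succ_iff_lt_or_eq]
        constructor
        · rintro (h | h)
          · exact Or.inr h
          · exact Or.inl (Fin.ext h)
        · rintro (h | h)
          · exact Or.inr (by rw [h])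
          · exact Or.inl h
      have hiknot : ik ∉ Finset.univ.filter (fun i : Fin n => (i:ℕ) < k) := by
        simp [hik]
      set Ek : ℝ := Real.exp ((1/2) * ∑ i ∈ Finset.univ.filter (fun i : Fin n => (i:ℕ) < k),
        (φ (g i))^2) with hEk
      have hEkpos : 0 < Ek := Real.exp_pos _
      have hRHS : Real.exp ((1/2) * ∑ i ∈ Finset.univ.filter (fun i : Fin n => (i:ℕ) < k+1),
          (φ (g i))^2) = Real.exp (y^2/2) * Ek := by
        rw [hfins, Finset.sum_insert hiknot, ← Real.exp_add, hy]
        congr 1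
        ring
      rw [List.map_append, List.sum_append, List.map_map, List.map_map]
      -- branch 0
      have hb0 : ((fun p : ℝ × EuclideanSpace ℝ (Fin n) => p.1 * Real.exp (φ (t - p.2))) ∘
          fun p : ℝ × EuclideanSpace ℝ (Fin n) => ((1-c)*p.1, x₀+p.2)) =
          fun p : ℝ × EuclideanSpace ℝ (Fin n) =>
            ((1-c) * Real.exp (c*y)) * (p.1 * Real.exp (φ (t₀ - p.2))) := by
        funext p
        simp only [Function.comp_apply]
        have : t - (x₀ + p.2) = c • g ik + (t₀ - p.2) := by
          rw [show t - (x₀ + p.2) = (t - x₀) - p.2 by abel, hdec₀]; abel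
        rw [this, map_add, LinearMap.map_smul, Real.exp_add, smul_eq_mul, hy]
        ring
      have hb1 : ((fun p : ℝ × EuclideanSpace ℝ (Fin n) => p.1 * Real.exp (φ (t - p.2))) ∘
          fun p : ℝ × EuclideanSpace ℝ (Fin n) => (c*p.1, x₁+p.2)) =
          fun p : ℝ × EuclideanSpace ℝ (Fin n) =>
            (c * Real.exp ((c-1)*y)) * (p.1 * Real.exp (φ (t₁ - p.2))) := by
        funext p
        simp only [Function.comp_apply]
        have : t - (x₁ + p.2) = (c-1) • g ik + (t₁ - p.2) := by
          rw [show t - (x₁ + p.2) = (t - x₁) - p.2 by abel, hdec₁]; abel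
        rw [this, map_add, LinearMap.map_smul, Real.exp_add, smul_eq_mul, hy]
        ring
      rw [hb0, hb1, List.sum_map_mul_left, List.sum_map_mul_left, hRHS]
      have h0 := hl₀φ φ
      have h1 := hl₁φ φ
      have hm0 : 0 ≤ (1-c) * Real.exp (c*y) := mul_nonneg (by linarith) (Real.exp_pos _).le
      have hm1 : 0 ≤ c * Real.exp ((c-1)*y) := mul_nonneg hc0 (Real.exp_pos _).le
      calc (1-c) * Real.exp (c*y) * (l₀.map fun p => p.1 * Real.exp (φ (t₀ - p.2))).sum +
            c * Real.exp ((c-1)*y) * (l₁.map fun p => p.1 * Real.exp (φ (t₁ - p.2))).sum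
          ≤ (1-c) * Real.exp (c*y) * Ek + c * Real.exp ((c-1)*y) * Ek := by
            exact add_le_add (mul_le_mul_of_nonneg_left h0 hm0)
              (mul_le_mul_of_nonneg_left h1 hm1)
        _ = ((1-c) * Real.exp (c*y) + c * Real.exp ((c-1)*y)) * Ek := by ring
        _ ≤ Real.exp (y^2/2) * Ek := by
            apply mul_le_mul_of_nonneg_right (two_point_mgf hc0 (le_of_lt hc1)) hEkpos.le

/-- Gram-Schmidt does not increase norms. -/
lemma gs_norm_le (n : ℕ) (v : Fin n → EuclideanSpace ℝ (Fin n)) (i : Fin n) :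
    ‖gs n v i‖ ≤ ‖v i‖ := by
  set g := gs n v with hg
  set w : EuclideanSpace ℝ (Fin n) := ∑ j ∈ Finset.Iio i,
      (Submodule.orthogonalProjection (ℝ ∙ g j) (v i) : EuclideanSpace ℝ (Fin n)) with hw
  have hvi : v i = g i + w := by rw [hw, hg, gs_def]; abel
  have horth : inner (𝕜 := ℝ) (g i) w = 0 := by
    rw [hw, inner_sum]
    apply Finset.sum_eq_zero
    intro j hj
    have hmem : (Submodule.orthogonalProjection (ℝ ∙ g j) (v i) : EuclideanSpace ℝ (Fin n)) ∈
        (ℝ ∙ g j) := SetLike.coe_mem _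
    obtain ⟨c, hc⟩ := Submodule.mem_span_singleton.1 hmem
    rw [← hc, inner_smul_right]
    have : inner (𝕜 := ℝ) (g i) (g j) = 0 :=
      gs_orthogonal n v (by exact fun h => (Finset.mem_Iio.1 hj).ne (by rw [h]))
    rw [this]; ring
  have hsq : ‖v i‖^2 = ‖g i‖^2 + ‖w‖^2 := by
    rw [hvi, @norm_add_sq_real, horth]; ring
  nlinarith [norm_nonneg (v i), norm_nonneg (g i), norm_nonneg w, sq_nonneg ‖w‖]

/-- column bound via Bessel -/
lemma gs_col_bound (n : ℕ) (v : Fin n → EuclideanSpace ℝ (Fin n))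
    (hli : LinearIndependent ℝ v) {r : ℝ} (hr : ∀ i, ‖v i‖ ≤ r)
    (x : EuclideanSpace ℝ (Fin n)) :
    ∑ i : Fin n, (inner (𝕜 := ℝ) (gs n v i) x)^2 ≤ r^2 * ‖x‖^2 := by
  set g := gs n v with hg
  set G : Fin n → EuclideanSpace ℝ (Fin n) := fun i => (‖g i‖)⁻¹ • g i with hG
  have hgne : ∀ i, g i ≠ 0 := fun i => gs_ne_zero n v hli i
  have hGorth : Orthonormal ℝ G := by
    rw [orthonormal_iff_ite]
    intro i j
    rw [hG]
    simp only [real_inner_smul_left, real_inner_smul_right]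
    by_cases h : i = j
    · subst h
      rw [real_inner_self_eq_norm_sq]
      have : ‖g i‖ ≠ 0 := norm_ne_zero_iff.2 (hgne i)
      simp [pow_two]
      field_simp
    · rw [gs_orthogonal n v h]
      simp [h]
  have hbessel := hGorth.sum_inner_products_le (s := Finset.univ) x
  have hexp : ∀ i : Fin n, (inner (𝕜 := ℝ) (g i) x)^2
      = ‖g i‖^2 * ‖(inner (𝕜 := ℝ) (G i) x)‖^2 := by
    intro i
    rw [hG, real_inner_smul_left, Real.norm_eq_abs, sq_abs]
    have : ‖g i‖ ≠ 0 := norm_ne_zero_iff.2 (hgne i)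
    field_simp
  calc ∑ i : Fin n, (inner (𝕜 := ℝ) (g i) x)^2
      = ∑ i : Fin n, ‖g i‖^2 * ‖(inner (𝕜 := ℝ) (G i) x)‖^2 := by
        exact Finset.sum_congr rfl fun i _ => hexp i
    _ ≤ ∑ i : Fin n, r^2 * ‖(inner (𝕜 := ℝ) (G i) x)‖^2 := by
        apply Finset.sum_le_sum
        intro i _
        apply mul_le_mul_of_nonneg_right _ (sq_nonneg _)
        have h1 : ‖g i‖ ≤ r := (gs_norm_le n v i).trans (hr i)
        nlinarith [norm_nonneg (g i)]
    _ = r^2 * ∑ i : Fin n, ‖(inner (𝕜 := ℝ) (G i) x)‖^2 := by rw [Finset.mul_sum]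
    _ ≤ r^2 * ‖x‖^2 := by
        apply mul_le_mul_of_nonneg_left hbessel (sq_nonneg r)

/-- extraction of a good point from a weighted list -/
lemma exists_good_point {E : Type*} (l : List (ℝ × E)) (F : E → ℝ) (B : ℝ)
    (hmem : ∀ p ∈ l, 0 ≤ p.1) (hsum : (l.map Prod.fst).sum = 1)
    (hF : (l.map fun p => p.1 * F p.2).sum ≤ B) :
    ∃ p ∈ l, F p.2 ≤ B := by
  by_contra hcon
  push_neg at hcon
  have hlt : ∀ p ∈ l, B < F p.2 := hcon
  -- there is a positive weight
  have hpos : ∃ p ∈ l, 0 < p.1 := by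
    by_contra hc
    push_neg at hc
    have : (l.map Prod.fst).sum = 0 := by
      apply List.sum_eq_zero
      intro x hx
      obtain ⟨p, hp, rfl⟩ := List.mem_map.1 hx
      exact le_antisymm (hc p hp) (hmem p hp)
    rw [this] at hsum; norm_num at hsum
  obtain ⟨p₀, hp₀l, hp₀⟩ := hpos
  have hstrict : (l.map fun p => p.1 * B).sum < (l.map fun p => p.1 * F p.2).sum := by
    apply List.sum_lt_sum
    · intro p hp
      exact mul_le_mul_of_nonneg_left (hlt p hp).le (hmem p hp)
    · exact ⟨p₀, hp₀l, by
        exact mul_lt_mul_of_pos_left (hlt p₀ hp₀l) hp₀⟩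
  rw [List.sum_map_mul_right, hsum, one_mul] at hstrict
  linarith

/-- swap list-sum and finset-sum -/
lemma list_sum_finset_sum {α β : Type*} (l : List α) (s : Finset β) (f : β → α → ℝ) :
    (l.map fun p => ∑ j ∈ s, f j p).sum = ∑ j ∈ s, (l.map fun p => f j p).sum := by
  induction l with
  | nil => simp
  | cons a l ih => simp [ih, Finset.sum_add_distrib]

lemma mem_smul_cb {n : ℕ} {r : ℝ} (hr : 0 < r) (x : EuclideanSpace ℝ (Fin n)) :
    x ∈ r • Metric.closedBall (0 : EuclideanSpace ℝ (Fin n)) 1 ↔ ‖x‖ ≤ r := by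
  rw [Set.mem_smul_set_iff_inv_smul_mem₀ (ne_of_gt hr)]
  rw [Metric.mem_closedBall, dist_zero_right, norm_smul]
  rw [norm_inv, Real.norm_eq_abs, abs_of_pos hr]
  rw [inv_mul_le_iff₀ hr, mul_one]

lemma exists_short_vectors (n : ℕ) (L : AddSubgroup (EuclideanSpace ℝ (Fin n)))
    {r : ℝ} (hr : 0 < r)
    (hrank : Module.finrank ℝ (Submodule.span ℝ
      ((L : Set (EuclideanSpace ℝ (Fin n))) ∩ r • Metric.closedBall 0 1)) = n) :
    ∃ v : Fin n → EuclideanSpace ℝ (Fin n),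
      LinearIndependent ℝ v ∧ (∀ i, v i ∈ L) ∧ ∀ i, ‖v i‖ ≤ r := by
  set s : Set (EuclideanSpace ℝ (Fin n)) :=
    (L : Set (EuclideanSpace ℝ (Fin n))) ∩ r • Metric.closedBall 0 1 with hs
  obtain ⟨b', hb'sub, hspan, hli⟩ := exists_linearIndependent ℝ s
  have hfin : b'.Finite := hli.setFinite
  haveI := hfin.fintype
  have hcard : b'.toFinset.card = n := by
    have := finrank_span_set_eq_card hli
    rw [hspan, hrank] at this
    exact this.symm
  have hcard' : Fintype.card b' = n := by rw [← Set.toFinset_card]; exact hcard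
  let e : Fin n ≃ b' := (Fintype.equivFinOfCardEq hcard').symm
  refine ⟨fun i => (e i : EuclideanSpace ℝ (Fin n)), ?_, ?_, ?_⟩
  · exact hli.comp e e.injective
  · intro i
    exact ((hb'sub (e i).2).1 : _)
  · intro i
    have := (hb'sub (e i).2).2
    exact (mem_smul_cb hr _).1 this

lemma covering_bound (n : ℕ) (hn : 2 ≤ n) (L : AddSubgroup (EuclideanSpace ℝ (Fin n)))
    (v : Fin n → EuclideanSpace ℝ (Fin n)) (hli : LinearIndependent ℝ v) (hvL : ∀ i, v i ∈ L)
    {r : ℝ} (hr : 0 < r) (hvr : ∀ i, ‖v i‖ ≤ r) (t : EuclideanSpace ℝ (Fin n)) :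
    ∃ u ∈ L, ∀ j : Fin n, |(t - u) j| ≤ 3 * Real.sqrt (Real.log n) * r := by
  have hn1 : (1:ℝ) < n := by exact_mod_cast lt_of_lt_of_le one_lt_two (by exact_mod_cast hn)
  set lg : ℝ := Real.log n with hlg
  have hlgpos : 0 < lg := Real.log_pos hn1
  set sq : ℝ := Real.sqrt lg with hsq
  have hsqpos : 0 < sq := Real.sqrt_pos.2 hlgpos
  have hsqsq : sq^2 = lg := Real.sq_sqrt hlgpos.le
  set s₀ : ℝ := sq / r with hs₀
  have hs₀pos : 0 < s₀ := div_pos hsqpos hr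
  -- t is in the full span
  have hspan : t ∈ Submodule.span ℝ (v '' {i : Fin n | (i:ℕ) < n}) := by
    have h1 : {i : Fin n | (i:ℕ) < n} = Set.univ := by
      ext i; simp [i.isLt]
    rw [h1, Set.image_univ]
    haveI : Nonempty (Fin n) := ⟨⟨0, by omega⟩⟩
    rw [hli.span_eq_top_of_card_eq_finrank (by simp [finrank_euclideanSpace_fin])]
    trivial
  obtain ⟨l, hlmem, hlsum, hlφ⟩ := key_induction n L v hvL n le_rfl t hspan
  -- the coordinate functionals
  set φj : Fin n → (EuclideanSpace ℝ (Fin n) →ₗ[ℝ] ℝ) :=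
    fun j => ((innerSL ℝ (EuclideanSpace.single j (1:ℝ))).toLinearMap) with hφj
  have hφj_apply : ∀ j x, φj j x = x j := by
    intro j x
    simp [hφj, EuclideanSpace.inner_single_left]
  -- sign-dependent coefficient
  set cf : Fin n × Bool → ℝ := fun js => if js.2 then s₀ else -s₀ with hcf
  have hcfsq : ∀ js, (cf js)^2 = s₀^2 := by
    intro js; rcases js with ⟨j, b⟩; cases b <;> simp [hcf]
  -- the potential function
  set F : EuclideanSpace ℝ (Fin n) → ℝ :=
    fun x => ∑ js : Fin n × Bool, Real.exp (cf js * x js.1) with hF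
  -- bound the weighted sum of F
  have hFsum : (l.map fun p => p.1 * F (t - p.2)).sum ≤
      (2 * n) * Real.exp (s₀^2 * r^2 / 2) := by
    have e1 : (l.map fun p => p.1 * F (t - p.2)) =
        l.map fun p => ∑ js : Fin n × Bool, p.1 * Real.exp (cf js * (t - p.2) js.1) := by
      apply List.map_congr_left
      intro p _
      rw [hF, Finset.mul_sum]
    rw [e1, list_sum_finset_sum]
    have hterm : ∀ js : Fin n × Bool,
        (l.map fun p => p.1 * Real.exp (cf js * (t - p.2) js.1)).sum ≤
          Real.exp (s₀^2 * r^2 / 2) := by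
      intro js
      have hφ := hlφ (cf js • φj js.1)
      have e2 : (l.map fun p => p.1 * Real.exp ((cf js • φj js.1) (t - p.2))) =
          l.map fun p => p.1 * Real.exp (cf js * (t - p.2) js.1) := by
        apply List.map_congr_left
        intro p _
        rw [LinearMap.smul_apply, smul_eq_mul, hφj_apply]
      rw [e2] at hφ
      refine hφ.trans ?_
      apply Real.exp_le_exp.2
      have hfilter : Finset.univ.filter (fun i : Fin n => (i:ℕ) < n) = Finset.univ := by
        apply Finset.filter_true_of_mem; intro i _; exact i.isLt
      rw [hfilter]
      have hcol := gs_col_bound n v hli hvr (EuclideanSpace.single js.1 (1:ℝ))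
      rw [EuclideanSpace.norm_single, norm_one] at hcol
      have e3 : ∀ i, ((cf js • φj js.1) (gs n v i))^2 =
          s₀^2 * (inner (𝕜 := ℝ) (gs n v i) (EuclideanSpace.single js.1 (1:ℝ)))^2 := by
        intro i
        rw [LinearMap.smul_apply, smul_eq_mul, mul_pow, hcfsq]
        congr 1
        rw [hφj_apply, real_inner_comm]
        simp [EuclideanSpace.inner_single_left]
      calc (1:ℝ)/2 * ∑ i, ((cf js • φj js.1) (gs n v i))^2
          = 1/2 * (s₀^2 * ∑ i, (inner (𝕜 := ℝ) (gs n v i) (EuclideanSpace.single js.1 (1:ℝ)))^2) := by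
            rw [Finset.sum_congr rfl fun i _ => e3 i, ← Finset.mul_sum]
        _ ≤ 1/2 * (s₀^2 * (r^2 * 1^2)) := by
            apply mul_le_mul_of_nonneg_left _ (by norm_num)
            apply mul_le_mul_of_nonneg_left hcol (sq_nonneg s₀)
        _ = s₀^2 * r^2 / 2 := by ring
    calc (∑ js : Fin n × Bool, (l.map fun p => p.1 * Real.exp (cf js * (t - p.2) js.1)).sum)
        ≤ ∑ js : Fin n × Bool, Real.exp (s₀^2 * r^2 / 2) :=
          Finset.sum_le_sum fun js _ => hterm js
      _ = (2 * n) * Real.exp (s₀^2 * r^2 / 2) := by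
          rw [Finset.sum_const, nsmul_eq_mul]
          norm_num [Fintype.card_prod]
          ring
  -- pick a good point
  obtain ⟨p, hpl, hpF⟩ := exists_good_point l (fun x => F (t - x))
    ((2*n) * Real.exp (s₀^2 * r^2 / 2))
    (fun p hp => (hlmem p hp).1) hlsum hFsum
  refine ⟨p.2, (hlmem p hpl).2, ?_⟩
  intro j
  -- coordinatewise bound
  have hcoord : Real.exp (s₀ * |(t - p.2) j|) ≤ F (t - p.2) := by
    rcases abs_cases ((t - p.2) j) with ⟨habs, _⟩ | ⟨habs, _⟩
    · have : Real.exp (s₀ * |(t - p.2) j|) = Real.exp (cf (j, true) * (t - p.2) j) := by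
        rw [habs]; simp [hcf]
      rw [this, hF]
      exact Finset.single_le_sum (f := fun js => Real.exp (cf js * (t - p.2) js.1))
        (fun js _ => (Real.exp_pos _).le) (Finset.mem_univ (j, true))
    · have : Real.exp (s₀ * |(t - p.2) j|) = Real.exp (cf (j, false) * (t - p.2) j) := by
        rw [habs]; simp [hcf]; ring_nf
      rw [this, hF]
      exact Finset.single_le_sum (f := fun js => Real.exp (cf js * (t - p.2) js.1))
        (fun js _ => (Real.exp_pos _).le) (Finset.mem_univ (j, false))
  have hB : Real.exp (s₀ * |(t - p.2) j|) ≤ (2*n) * Real.exp (s₀^2 * r^2 / 2) :=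
    hcoord.trans hpF
  have h2n : (0:ℝ) < 2 * n := by positivity
  have hlog : s₀ * |(t - p.2) j| ≤ Real.log (2*n) + s₀^2 * r^2/2 := by
    have := Real.log_le_log (Real.exp_pos _) hB
    rw [Real.log_exp, Real.log_mul (ne_of_gt h2n) (ne_of_gt (Real.exp_pos _)),
      Real.log_exp] at this
    linarith
  have hlog2n : Real.log (2*n) ≤ 2 * lg := by
    have : Real.log (2*n) = Real.log 2 + Real.log n :=
      Real.log_mul (by norm_num) (by positivity)
    have h2 : Real.log 2 ≤ Real.log n := by
      apply Real.log_le_log (by norm_num)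
      exact_mod_cast hn
    rw [this, hlg]; linarith
  -- final arithmetic
  have hs₀r : s₀ * r = sq := by rw [hs₀]; field_simp
  have hs₀sq : s₀^2 * r^2 = lg := by
    rw [← mul_pow, hs₀r, hsqsq]
  rw [hs₀sq] at hlog
  -- s₀ * A ≤ 2lg + lg/2 = (5/2) lg = (5/2) sq^2; A ≤ (5/2) sq^2 / s₀ = (5/2) sq r
  have hA : s₀ * |(t - p.2) j| ≤ (5/2) * sq^2 := by
    rw [hsqsq]; linarith
  have : |(t - p.2) j| ≤ (5/2) * sq * r := by
    have h1 : s₀ * |(t - p.2) j| ≤ s₀ * ((5/2) * sq * r) := by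
      rw [show s₀ * ((5/2) * sq * r) = (5/2) * sq * (s₀ * r) by ring, hs₀r]
      calc s₀ * |(t - p.2) j| ≤ (5/2) * sq^2 := hA
        _ = (5/2) * sq * sq := by ring
    exact le_of_mul_le_mul_left h1 hs₀pos
  calc |(t - p.2) j| ≤ (5/2) * sq * r := this
    _ ≤ 3 * sq * r := by nlinarith

theorem stmt_11 :
    ∃ C : ℝ, 0 < C ∧ ∀ n : ℕ, 2 ≤ n →
      ∀ b : Fin n → EuclideanSpace ℝ (Fin n), LinearIndependent ℝ b →
        covRad n (AddSubgroup.closure (Set.range b))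
            {x : EuclideanSpace ℝ (Fin n) | ∀ i, |x i| ≤ 1} ≤
          C * Real.sqrt (Real.log n) *
            nthMin n (AddSubgroup.closure (Set.range b)) (Metric.closedBall 0 1) := by
  refine ⟨3, by norm_num, ?_⟩
  intro n hn b hb
  set L : AddSubgroup (EuclideanSpace ℝ (Fin n)) := AddSubgroup.closure (Set.range b) with hL
  set K : Set (EuclideanSpace ℝ (Fin n)) := {x | ∀ i, |x i| ≤ 1} with hK
  set Smin : Set ℝ := {r : ℝ | 0 < r ∧
    Module.finrank ℝ (Submodule.span ℝ
      ((L : Set (EuclideanSpace ℝ (Fin n))) ∩ r • Metric.closedBall 0 1)) = n} with hSmin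
  have hn1 : (1:ℝ) < n := by exact_mod_cast lt_of_lt_of_le one_lt_two (by exact_mod_cast hn)
  have hlgpos : (0:ℝ) < Real.log n := Real.log_pos hn1
  have hsqpos : (0:ℝ) < Real.sqrt (Real.log n) := Real.sqrt_pos.2 hlgpos
  -- Smin is nonempty
  have hbL : ∀ i, b i ∈ L := fun i => AddSubgroup.subset_closure (Set.mem_range_self i)
  have hSminne : Smin.Nonempty := by
    classical
    set r₀ : ℝ := (Finset.univ.sup' (by
      haveI : Nonempty (Fin n) := ⟨⟨0, by omega⟩⟩
      exact Finset.univ_nonempty) (fun i => ‖b i‖)) + 1 with hr₀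
    haveI : Nonempty (Fin n) := ⟨⟨0, by omega⟩⟩
    have hr₀pos : 0 < r₀ := by
      have : (0:ℝ) ≤ Finset.univ.sup' Finset.univ_nonempty (fun i => ‖b i‖) := by
        obtain ⟨i⟩ := (inferInstance : Nonempty (Fin n))
        exact le_trans (norm_nonneg (b i)) (Finset.le_sup' (fun i => ‖b i‖) (Finset.mem_univ i))
      linarith
    refine ⟨r₀, hr₀pos, ?_⟩
    have hsub : Set.range b ⊆
        (L : Set (EuclideanSpace ℝ (Fin n))) ∩ r₀ • Metric.closedBall 0 1 := by
      rintro x ⟨i, rfl⟩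
      refine ⟨hbL i, (mem_smul_cb hr₀pos _).2 ?_⟩
      have := Finset.le_sup' (fun i => ‖b i‖) (Finset.mem_univ i)
      rw [hr₀]; linarith
    have htop : Submodule.span ℝ
        ((L : Set (EuclideanSpace ℝ (Fin n))) ∩ r₀ • Metric.closedBall 0 1) = ⊤ := by
      apply eq_top_iff.2
      rw [← hb.span_eq_top_of_card_eq_finrank (by simp [finrank_euclideanSpace_fin])]
      exact Submodule.span_mono hsub
    rw [htop]
    simp [finrank_euclideanSpace_fin]
  -- main bound for every ε > 0
  have hmain : ∀ ε > 0, covRad n L K ≤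
      3 * Real.sqrt (Real.log n) * (nthMin n L (Metric.closedBall 0 1) + ε) := by
    intro ε hε
    obtain ⟨r, hrS, hrlt⟩ := Real.lt_sInf_add_pos hSminne hε
    obtain ⟨hrpos, hrrank⟩ := hrS
    obtain ⟨v, hli, hvL, hvr⟩ := exists_short_vectors n L hrpos hrrank
    set R : ℝ := 3 * Real.sqrt (Real.log n) * r with hR
    have hRpos : 0 < R := by positivity
    have hcover : (L : Set (EuclideanSpace ℝ (Fin n))) + R • K = Set.univ := by
      apply Set.eq_univ_iff_forall.2
      intro t
      obtain ⟨u, huL, hu⟩ := covering_bound n hn L v hli hvL hrpos hvr t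
      refine Set.mem_add.2 ⟨u, huL, t - u, ?_, by abel⟩
      rw [Set.mem_smul_set_iff_inv_smul_mem₀ (ne_of_gt hRpos)]
      intro j
      have : (R⁻¹ • (t - u)) j = R⁻¹ * (t - u) j := rfl
      rw [this, abs_mul, abs_inv, abs_of_pos hRpos]
      rw [inv_mul_le_iff₀ hRpos, mul_one]
      exact hu j
    have hmem : R ∈ {r : ℝ | 0 < r ∧ (L : Set (EuclideanSpace ℝ (Fin n))) + r • K = Set.univ} :=
      ⟨hRpos, hcover⟩
    have hbdd : BddBelow {r : ℝ | 0 < r ∧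
        (L : Set (EuclideanSpace ℝ (Fin n))) + r • K = Set.univ} :=
      ⟨0, fun x hx => hx.1.le⟩
    calc covRad n L K ≤ R := csInf_le hbdd hmem
      _ ≤ 3 * Real.sqrt (Real.log n) * (nthMin n L (Metric.closedBall 0 1) + ε) := by
          rw [hR]
          apply mul_le_mul_of_nonneg_left _ (by positivity)
          exact le_of_lt hrlt
  -- pass to the limit
  have : ∀ δ > 0, covRad n L K ≤
      3 * Real.sqrt (Real.log n) * nthMin n L (Metric.closedBall 0 1) + δ := by
    intro δ hδ
    have hc : 0 < 3 * Real.sqrt (Real.log n) := by positivity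
    have := hmain (δ / (3 * Real.sqrt (Real.log n))) (by positivity)
    calc covRad n L K ≤ 3 * Real.sqrt (Real.log n) *
          (nthMin n L (Metric.closedBall 0 1) + δ / (3 * Real.sqrt (Real.log n))) := this
      _ = 3 * Real.sqrt (Real.log n) * nthMin n L (Metric.closedBall 0 1) + δ := by
          field_simp
  exact le_of_forall_pos_le_add this
end

section
/- Ehrhard's inequality in dimension 1: for non-empty convex Borel subsets A, B of ℝ (i.e., intervals) and 0 ≤ λ ≤ 1, Φ^{−1}(γ₁(λA + (1−λ)B)) ≥ λΦ^{−1}(γ₁(A)) + (1−λ)Φ^{−1}(γ₁(B)), where λA + (1−λ)B is the Minkowski combination. -/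
open MeasureTheory Real

/-- Standard Gaussian cumulative distribution function. -/
noncomputable def Phi (x : ℝ) : ℝ := (gaussian1 (Set.Iic x)).toReal

/-- Inverse of the standard Gaussian CDF. -/
noncomputable def PhiInv : ℝ → ℝ := Function.invFun Phi

open Pointwise

/-- Inverse Gaussian CDF on measures, with the conventions Φ⁻¹(0) = -∞, Φ⁻¹(1) = +∞. -/
noncomputable def PhiInvE (p : ENNReal) : EReal :=
  if p = 0 then ⊥ else if 1 ≤ p then ⊤ else ((PhiInv p.toReal : ℝ) : EReal)

open Set Filter

noncomputable def psi (x : ℝ) : ℝ := (2 * π) ^ (-(1 : ℝ) / 2) * Real.exp (-x ^ 2 / 2)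

lemma psi_pos (x : ℝ) : 0 < psi x := by
  apply mul_pos (Real.rpow_pos_of_pos (by positivity) _) (Real.exp_pos _)

lemma psi_even (x : ℝ) : psi (-x) = psi x := by simp [psi]

lemma psi_continuous : Continuous psi := by
  apply continuous_const.mul (Real.continuous_exp.comp (by continuity))

lemma hasDerivAt_psi (x : ℝ) : HasDerivAt psi (-x * psi x) x := by
  have h1 : HasDerivAt (fun x : ℝ => -x ^ 2 / 2) (-x) x := by
    have := ((hasDerivAt_pow 2 x).neg).div_const 2
    simpa using this.congr_deriv (by ring)
  have h2 := (h1.exp).const_mul ((2 * π) ^ (-(1 : ℝ) / 2))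
  exact h2.congr_deriv (by simp only [psi]; ring)

lemma psi_integrable : Integrable psi := by
  have : Integrable (fun x : ℝ => Real.exp (-(2⁻¹ : ℝ) * x ^ 2)) := integrable_exp_neg_mul_sq (by norm_num)
  have h2 : (fun x : ℝ => Real.exp (-x ^ 2 / 2)) = fun x : ℝ => Real.exp (-(2⁻¹ : ℝ) * x ^ 2) := by
    funext x; ring_nf
  exact ((h2 ▸ this).const_mul _)

lemma psi_integral_one : ∫ x, psi x = 1 := by
  have h : ∫ x, psi x = (2 * π) ^ (-(1 : ℝ) / 2) * ∫ x, Real.exp (-(2⁻¹:ℝ) * x ^ 2) := by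
    rw [← MeasureTheory.integral_const_mul]
    congr 1; funext x; simp only [psi]; ring_nf
  rw [h, integral_gaussian]
  have h2 : π / (2⁻¹:ℝ) = 2 * π := by ring
  rw [h2, Real.sqrt_eq_rpow, ← Real.rpow_add (by positivity)]
  norm_num

lemma gaussian1_apply_meas {s : Set ℝ} (hs : MeasurableSet s) :
    gaussian1 s = ENNReal.ofReal (∫ x in s, psi x) := by
  rw [gaussian1, withDensity_apply _ hs]
  show ∫⁻ a in s, ENNReal.ofReal (psi a) ∂volume = _
  rw [← ofReal_integral_eq_lintegral_ofReal psi_integrable.restrict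
      (Filter.Eventually.of_forall fun x => (psi_pos x).le)]

lemma gaussian1_univ : gaussian1 univ = 1 := by
  rw [gaussian1_apply_meas MeasurableSet.univ]
  simp only [Measure.restrict_univ, psi_integral_one, ENNReal.ofReal_one]

instance : IsProbabilityMeasure gaussian1 := ⟨gaussian1_univ⟩

lemma gaussian1_ne_top (s : Set ℝ) : gaussian1 s ≠ ⊤ :=
  (lt_of_le_of_lt (measure_mono (subset_univ s)) (by rw [gaussian1_univ]; exact ENNReal.one_lt_top)).ne

lemma gaussian1_le_one (s : Set ℝ) : gaussian1 s ≤ 1 := by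
  rw [← gaussian1_univ]; exact measure_mono (subset_univ s)

lemma Phi_eq_integral (x : ℝ) : Phi x = ∫ t in Iic x, psi t := by
  rw [Phi, gaussian1_apply_meas measurableSet_Iic, ENNReal.toReal_ofReal]
  exact integral_nonneg fun t => (psi_pos t).le

lemma gaussian1_Iic (x : ℝ) : gaussian1 (Iic x) = ENNReal.ofReal (Phi x) := by
  rw [Phi, ENNReal.ofReal_toReal (gaussian1_ne_top _)]

lemma gaussian1_singleton (a : ℝ) : gaussian1 {a} = 0 :=
  (withDensity_absolutelyContinuous volume _) Real.volume_singleton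

lemma gaussian1_Iic_add_Ioc {a b : ℝ} (h : a ≤ b) :
    gaussian1 (Iic b) = gaussian1 (Iic a) + gaussian1 (Ioc a b) := by
  rw [← Set.Iic_union_Ioc_eq_Iic h, measure_union (Set.Iic_disjoint_Ioc le_rfl) measurableSet_Ioc]

lemma gaussian1_Ioc_toReal {a b : ℝ} (h : a ≤ b) :
    (gaussian1 (Ioc a b)).toReal = Phi b - Phi a := by
  have := gaussian1_Iic_add_Ioc h
  have h2 : Phi b = Phi a + (gaussian1 (Ioc a b)).toReal := by
    rw [Phi, Phi, this, ENNReal.toReal_add (gaussian1_ne_top _) (gaussian1_ne_top _)]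
  linarith

lemma gaussian1_Ioc {a b : ℝ} (h : a ≤ b) :
    gaussian1 (Ioc a b) = ENNReal.ofReal (Phi b - Phi a) := by
  rw [← gaussian1_Ioc_toReal h, ENNReal.ofReal_toReal (gaussian1_ne_top _)]

lemma gaussian1_Ioo {a b : ℝ} (h : a ≤ b) :
    gaussian1 (Ioo a b) = ENNReal.ofReal (Phi b - Phi a) := by
  rw [← gaussian1_Ioc h]
  apply le_antisymm (measure_mono Set.Ioo_subset_Ioc_self)
  calc gaussian1 (Ioc a b) ≤ gaussian1 (Ioo a b ∪ {b}) := by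
        apply measure_mono; intro x hx
        rcases eq_or_lt_of_le hx.2 with h1 | h1
        · exact Or.inr (by simp [h1])
        · exact Or.inl ⟨hx.1, h1⟩
    _ ≤ gaussian1 (Ioo a b) + gaussian1 {b} := measure_union_le _ _
    _ = gaussian1 (Ioo a b) := by rw [gaussian1_singleton, add_zero]

lemma gaussian1_Iic_add_Ioi (a : ℝ) :
    gaussian1 (Iic a) + gaussian1 (Ioi a) = 1 := by
  rw [← measure_union (Set.Iic_disjoint_Ioi le_rfl) measurableSet_Ioi, Set.Iic_union_Ioi,
    gaussian1_univ]

lemma gaussian1_Ioi_toReal (a : ℝ) : (gaussian1 (Ioi a)).toReal = 1 - Phi a := by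
  have := gaussian1_Iic_add_Ioi a
  have h2 : Phi a + (gaussian1 (Ioi a)).toReal = 1 := by
    rw [Phi, ← ENNReal.toReal_add (gaussian1_ne_top _) (gaussian1_ne_top _), this, ENNReal.toReal_one]
  linarith

lemma gaussian1_Ioc_pos {a b : ℝ} (h : a < b) : 0 < gaussian1 (Ioc a b) := by
  rw [gaussian1_apply_meas measurableSet_Ioc]
  have hint : ∫ x in Ioc a b, psi x = ∫ x in a..b, psi x := by
    rw [intervalIntegral.integral_of_le h.le]
  rw [hint]
  apply ENNReal.ofReal_pos.2
  exact intervalIntegral.intervalIntegral_pos_of_pos_on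
    (psi_continuous.intervalIntegrable a b) (fun x _ => psi_pos x) h

lemma Phi_strictMono : StrictMono Phi := by
  intro a b h
  have h1 := gaussian1_Ioc_toReal h.le
  have h2 : 0 < (gaussian1 (Ioc a b)).toReal :=
    ENNReal.toReal_pos (gaussian1_Ioc_pos h).ne' (gaussian1_ne_top _)
  linarith

lemma Phi_pos (x : ℝ) : 0 < Phi x := by
  have h1 := gaussian1_Ioc_toReal (show x - 1 ≤ x by linarith)
  have h2 : 0 < (gaussian1 (Ioc (x-1) x)).toReal :=
    ENNReal.toReal_pos (gaussian1_Ioc_pos (by linarith)).ne' (gaussian1_ne_top _)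
  have h3 : 0 ≤ Phi (x - 1) := ENNReal.toReal_nonneg
  linarith

lemma Phi_lt_one (x : ℝ) : Phi x < 1 := by
  have h1 := gaussian1_Ioi_toReal x
  have h2 : 0 < (gaussian1 (Ioi x)).toReal := by
    apply ENNReal.toReal_pos _ (gaussian1_ne_top _)
    exact (lt_of_lt_of_le (gaussian1_Ioc_pos (show x < x + 1 by linarith))
      (measure_mono Set.Ioc_subset_Ioi_self)).ne'
  linarith

lemma Phi_monotone : Monotone Phi := Phi_strictMono.monotone

lemma tendsto_Phi_atTop : Filter.Tendsto Phi Filter.atTop (nhds 1) := by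
  have h := tendsto_measure_Iic_atTop (μ := gaussian1)
  rw [gaussian1_univ] at h
  have h2 := (ENNReal.tendsto_toReal ENNReal.one_ne_top).comp h
  rw [ENNReal.toReal_one] at h2; exact h2

lemma tendsto_Phi_atBot : Filter.Tendsto Phi Filter.atBot (nhds 0) := by
  have h1 : Filter.Tendsto (fun x : ℝ => gaussian1 (Ici x)) Filter.atBot (nhds 1) := by
    simpa [gaussian1_univ] using tendsto_measure_Ici_atBot (μ := gaussian1)
  have h2 : Filter.Tendsto (fun x : ℝ => gaussian1 (Ioi x)) Filter.atBot (nhds 1) := by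
    apply tendsto_of_tendsto_of_tendsto_of_le_of_le
      (g := fun x : ℝ => gaussian1 (Ici (x + 1))) (h := fun _ : ℝ => (1 : ENNReal))
    · exact h1.comp (Filter.tendsto_atBot_add_const_right _ 1 Filter.tendsto_id)
    · exact tendsto_const_nhds
    · intro x
      exact measure_mono (fun y hy => lt_of_lt_of_le (by linarith : x < x + 1) hy)
    · intro x; exact gaussian1_le_one _
  have h3 := (ENNReal.tendsto_toReal ENNReal.one_ne_top).comp h2
  rw [ENNReal.toReal_one] at h3
  have h4 := h3.const_sub 1
  rw [sub_self] at h4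
  apply h4.congr
  intro x
  have := gaussian1_Ioi_toReal x
  simp only [Function.comp]
  linarith

lemma hasDerivAt_Phi (x : ℝ) : HasDerivAt Phi (psi x) x := by
  have key : ∀ y, Phi y = Phi 0 + ∫ t in (0:ℝ)..y, psi t := by
    intro y
    rw [Phi_eq_integral, Phi_eq_integral,
      ← intervalIntegral.integral_Iic_sub_Iic psi_integrable.integrableOn psi_integrable.integrableOn]
    ring
  have h : HasDerivAt (fun y => Phi 0 + ∫ t in (0:ℝ)..y, psi t) (psi x) x := by
    apply HasDerivAt.const_add
    exact intervalIntegral.integral_hasDerivAt_right (psi_continuous.intervalIntegrable _ _)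
      (psi_continuous.stronglyMeasurableAtFilter _ _) psi_continuous.continuousAt
  exact h.congr_of_eventuallyEq (Filter.Eventually.of_forall key)

lemma Phi_continuous : Continuous Phi :=
  continuous_iff_continuousAt.2 fun x => (hasDerivAt_Phi x).continuousAt

lemma Phi_surj {y : ℝ} (hy : y ∈ Ioo (0:ℝ) 1) : ∃ x, Phi x = y := by
  obtain ⟨a, ha⟩ := (tendsto_Phi_atBot.eventually_lt_const hy.1).exists
  obtain ⟨b, hb⟩ := (tendsto_Phi_atTop.eventually_const_lt hy.2).exists
  have hab : a ≤ b := (Phi_strictMono.lt_iff_lt.1 (ha.trans hb)).le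
  obtain ⟨x, _, hx⟩ := intermediate_value_Icc hab Phi_continuous.continuousOn
    (mem_Icc.2 ⟨ha.le, hb.le⟩)
  exact ⟨x, hx⟩

lemma Phi_mem_Ioo (x : ℝ) : Phi x ∈ Ioo (0:ℝ) 1 := ⟨Phi_pos x, Phi_lt_one x⟩

lemma PhiInv_Phi (x : ℝ) : PhiInv (Phi x) = x :=
  Function.leftInverse_invFun Phi_strictMono.injective x

lemma Phi_PhiInv {y : ℝ} (hy : y ∈ Ioo (0:ℝ) 1) : Phi (PhiInv y) = y := by
  obtain ⟨x, hx⟩ := Phi_surj hy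
  exact Function.invFun_eq ⟨x, hx⟩

lemma PhiInv_le_PhiInv {u w : ℝ} (hu : u ∈ Ioo (0:ℝ) 1) (hw : w ∈ Ioo (0:ℝ) 1)
    (h : u ≤ w) : PhiInv u ≤ PhiInv w := by
  by_contra hc
  push_neg at hc
  have := Phi_strictMono hc
  rw [Phi_PhiInv hu, Phi_PhiInv hw] at this
  linarith

lemma continuousAt_PhiInv {y : ℝ} (hy : y ∈ Ioo (0:ℝ) 1) : ContinuousAt PhiInv y := by
  obtain ⟨x₀, hx₀⟩ := Phi_surj hy
  have hinv : PhiInv y = x₀ := by rw [← hx₀, PhiInv_Phi]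
  rw [ContinuousAt, hinv]
  apply tendsto_order.2
  constructor
  · intro a ha
    have h1 : Ioo (Phi a) 1 ∈ nhds y := by
      apply Ioo_mem_nhds _ hy.2
      rw [← hx₀]; exact Phi_strictMono ha
    filter_upwards [h1] with z hz
    have hz' : z ∈ Ioo (0:ℝ) 1 := ⟨lt_trans (Phi_pos a) hz.1, hz.2⟩
    by_contra hc
    push_neg at hc
    have := Phi_strictMono.monotone hc
    rw [Phi_PhiInv hz'] at this
    exact absurd (lt_of_lt_of_le hz.1 this) (lt_irrefl _)
  · intro b hb
    have h1 : Ioo (0:ℝ) (Phi b) ∈ nhds y := by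
      apply Ioo_mem_nhds hy.1
      rw [← hx₀]; exact Phi_strictMono hb
    filter_upwards [h1] with z hz
    have hz' : z ∈ Ioo (0:ℝ) 1 := ⟨hz.1, lt_trans hz.2 (Phi_lt_one b)⟩
    by_contra hc
    push_neg at hc
    have := Phi_strictMono.monotone hc
    rw [Phi_PhiInv hz'] at this
    exact absurd (lt_of_le_of_lt this hz.2) (lt_irrefl _)

lemma hasDerivAt_PhiInv {y : ℝ} (hy : y ∈ Ioo (0:ℝ) 1) :
    HasDerivAt PhiInv (psi (PhiInv y))⁻¹ y := by
  apply HasDerivAt.of_local_left_inverse (continuousAt_PhiInv hy) (hasDerivAt_Phi (PhiInv y))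
    (psi_pos _).ne'
  have h1 : Ioo (0:ℝ) 1 ∈ nhds y := Ioo_mem_nhds hy.1 hy.2
  filter_upwards [h1] with z hz
  exact Phi_PhiInv hz

/-- monotonicity of x / psi x -/
lemma m_mono : Monotone (fun t : ℝ => t / psi t) := by
  apply monotone_of_deriv_nonneg
  · exact differentiable_id.div (fun t => (hasDerivAt_psi t).differentiableAt)
      (fun t => (psi_pos t).ne')
  · intro t
    have hd : HasDerivAt (fun t : ℝ => t / psi t)
        ((1 * psi t - t * (-t * psi t)) / (psi t) ^ 2) t :=
      (hasDerivAt_id t).div (hasDerivAt_psi t) (psi_pos t).ne'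
    rw [hd.deriv]
    apply div_nonneg _ (sq_nonneg _)
    nlinarith [psi_pos t, sq_nonneg t]

lemma m_mono' {x y : ℝ} (h : x ≤ y) : x * psi y ≤ y * psi x := by
  have := m_mono h
  rwa [div_le_div_iff₀ (psi_pos x) (psi_pos y)] at this

/-- Mills-type bound. -/
lemma mills (t : ℝ) : t * psi t / (1 + t ^ 2) ≤ 1 - Phi t := by
  set D := fun t : ℝ => (1 - Phi t) - t * psi t / (1 + t ^ 2) with hD
  have hone : ∀ s : ℝ, (0:ℝ) < 1 + s ^ 2 := fun s => by positivity
  have hderiv : ∀ s : ℝ, HasDerivAt D (-2 * psi s / (1 + s ^ 2) ^ 2) s := by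
    intro s
    have h1 : HasDerivAt (fun u : ℝ => 1 - Phi u) (-psi s) s := by
      simpa using (hasDerivAt_Phi s).const_sub 1
    have h2 : HasDerivAt (fun u : ℝ => u * psi u) (1 * psi s + s * (-s * psi s)) s :=
      (hasDerivAt_id s).mul (hasDerivAt_psi s)
    have h3 : HasDerivAt (fun u : ℝ => 1 + u ^ 2) ((2:ℕ) * s ^ 1) s := by
      simpa using ((hasDerivAt_pow 2 s).const_add 1)
    have h4 := h2.div h3 (hone s).ne'
    have h5 := h1.sub h4
    apply h5.congr_deriv
    have h6 := (hone s).ne'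
    field_simp
    ring
  have hanti : Antitone D := by
    apply antitone_of_deriv_nonpos (fun s => (hderiv s).differentiableAt)
    intro s
    rw [(hderiv s).deriv]
    apply div_nonpos_of_nonpos_of_nonneg _ (sq_nonneg _)
    nlinarith [psi_pos s]
  have hpsi_lim : Tendsto psi atTop (nhds 0) := by
    have h1 : Tendsto (fun t : ℝ => t ^ 2 / 2) atTop atTop :=
      (tendsto_pow_atTop (by norm_num : (2:ℕ) ≠ 0)).atTop_div_const (by norm_num)
    have h2 : Tendsto (fun t : ℝ => Real.exp (-(t ^ 2 / 2))) atTop (nhds 0) :=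
      Real.tendsto_exp_neg_atTop_nhds_zero.comp h1
    have h3 := h2.const_mul ((2 * π) ^ (-(1:ℝ)/2))
    rw [mul_zero] at h3
    apply h3.congr
    intro t
    simp only [psi, neg_div]
  have hlim : Tendsto D atTop (nhds 0) := by
    have h1 : Tendsto (fun t : ℝ => 1 - Phi t) atTop (nhds 0) := by
      have := tendsto_Phi_atTop.const_sub 1
      simpa using this
    have h2 : Tendsto (fun t : ℝ => t * psi t / (1 + t ^ 2)) atTop (nhds 0) := by
      apply tendsto_of_tendsto_of_tendsto_of_le_of_le' tendsto_const_nhds hpsi_lim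
      · filter_upwards [eventually_ge_atTop (0:ℝ)] with t ht
        exact div_nonneg (mul_nonneg ht (psi_pos t).le) (by positivity)
      · filter_upwards [eventually_ge_atTop (0:ℝ)] with t ht
        rw [div_le_iff₀ (hone t)]
        nlinarith [psi_pos t, sq_nonneg (t - 1)]
    have := h1.sub h2
    simpa using this
  have h0 : (0:ℝ) ≤ D t := le_of_tendsto hlim (by
    filter_upwards [eventually_ge_atTop t] with s hs
    exact hanti hs)
  simp only [hD] at h0
  linarith

/-- The function H(t) = t(1-Phi t)/psi t is monotone. -/
lemma H_mono : Monotone (fun t : ℝ => t * (1 - Phi t) / psi t) := by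
  apply monotone_of_deriv_nonneg
  · apply Differentiable.div _ (fun t => (hasDerivAt_psi t).differentiableAt)
      (fun t => (psi_pos t).ne')
    exact differentiable_id.mul (fun t => ((hasDerivAt_Phi t).const_sub 1).differentiableAt)
  · intro t
    have h1 : HasDerivAt (fun u : ℝ => 1 - Phi u) (-psi t) t := by
      simpa using (hasDerivAt_Phi t).const_sub 1
    have h2 : HasDerivAt (fun u : ℝ => u * (1 - Phi u))
        (1 * (1 - Phi t) + t * (-psi t)) t := (hasDerivAt_id t).mul h1
    have h3 := h2.div (hasDerivAt_psi t) (psi_pos t).ne'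
    have h3' : HasDerivAt (fun t : ℝ => t * (1 - Phi t) / psi t) _ t := h3
    rw [h3'.deriv]
    apply div_nonneg _ (sq_nonneg _)
    have hm := mills t
    have h4 : t * psi t ≤ (1 + t ^ 2) * (1 - Phi t) := by
      rw [div_le_iff₀ (by positivity : (0:ℝ) < 1 + t ^ 2)] at hm
      linarith
    nlinarith [psi_pos t, sq_nonneg t]

/-- Key superadditivity inequality. -/
lemma key11 {v b c : ℝ} (hv : 0 < v) (hb : 0 < b) (hc : 0 < c)
    (h : Phi v = Phi b + Phi c - 1) : psi b / b + psi c / c ≤ psi v / v := by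
  have hvb : v ≤ b := Phi_strictMono.le_iff_le.1 (by nlinarith [Phi_lt_one c])
  have hvc : v ≤ c := Phi_strictMono.le_iff_le.1 (by nlinarith [Phi_lt_one b])
  set H := fun t : ℝ => t * (1 - Phi t) / psi t with hH
  have hHv : 0 < H v := by
    apply div_pos _ (psi_pos v)
    exact mul_pos hv (by linarith [Phi_lt_one v])
  have he : ∀ t : ℝ, 0 < t → psi t / t = (1 - Phi t) / H t := by
    intro t ht
    have h1 : (1:ℝ) - Phi t ≠ 0 := by have := Phi_lt_one t; linarith
    have h2 : (0:ℝ) < 1 - Phi t := by have := Phi_lt_one t; linarith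
    rw [hH]
    rw [div_div_eq_mul_div]
    rw [div_eq_div_iff ht.ne' (by nlinarith : (t * (1 - Phi t) ≠ 0))]
    ring
  rw [he v hv, he b hb, he c hc]
  have h1 : (1 - Phi b) / H b ≤ (1 - Phi b) / H v := by
    gcongr
    · linarith [Phi_lt_one b]
    · exact H_mono hvb
  have h2 : (1 - Phi c) / H c ≤ (1 - Phi c) / H v := by
    gcongr
    · linarith [Phi_lt_one c]
    · exact H_mono hvc
  have h3 : (1 - Phi b) / H v + (1 - Phi c) / H v = (1 - Phi v) / H v := by
    rw [← add_div]
    congr 1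
    linarith
  linarith

lemma Phi_neg (x : ℝ) : Phi (-x) = 1 - Phi x := by
  have h1 : (∫ t in Iic (-x), psi (-t)) = ∫ t in Ioi x, psi t := by
    rw [integral_comp_neg_Iic]
    norm_num
  have h2 : (∫ t in Iic (-x), psi (-t)) = Phi (-x) := by
    rw [Phi_eq_integral]
    simp_rw [psi_even]
  have h3 : (gaussian1 (Ioi x)).toReal = ∫ t in Ioi x, psi t := by
    rw [gaussian1_apply_meas measurableSet_Ioi,
      ENNReal.toReal_ofReal (integral_nonneg fun t => (psi_pos t).le)]
  rw [← h2, h1, ← h3, gaussian1_Ioi_toReal]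

lemma Phi_zero : Phi 0 = 1/2 := by
  have := Phi_neg 0
  rw [neg_zero] at this
  linarith

/-- multiplied form of key11 -/
lemma key11m {v b c : ℝ} (hv : 0 < v) (hb : 0 < b) (hc : 0 < c)
    (h : Phi v = Phi b + Phi c - 1) :
    c * v * psi b + b * v * psi c ≤ b * c * psi v := by
  have h1 := key11 hv hb hc h
  rw [div_add_div _ _ hb.ne' hc.ne', div_le_div_iff₀ (by positivity) hv] at h1
  nlinarith [h1]

/-- key10 with ordering -/
lemma key10'' {v b c : ℝ} (h : Phi v = Phi b + Phi c - 1) (hcb : c ≤ b) :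
    b * v * psi c + c * v * psi b ≤ b * c * psi v := by
  have hvb : v ≤ b := Phi_strictMono.le_iff_le.1 (by nlinarith [Phi_lt_one c])
  have hvc : v ≤ c := Phi_strictMono.le_iff_le.1 (by nlinarith [Phi_lt_one b])
  have hbc : -c < b := by
    have h2 : Phi (-c) < Phi b := by
      rw [Phi_neg]
      nlinarith [Phi_pos v]
    exact Phi_strictMono.lt_iff_lt.1 h2
  rcases lt_trichotomy v 0 with hv0 | hv0 | hv0
  · rcases lt_trichotomy c 0 with hc0 | hc0 | hc0
    · -- v < 0, c < 0, b > 0 : use key11m on (-c, b, -v)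
      have hb0 : 0 < b := by linarith
      have hrel : Phi (-c) = Phi b + Phi (-v) - 1 := by
        rw [Phi_neg, Phi_neg]
        linarith
      have := key11m (by linarith : (0:ℝ) < -c) hb0 (by linarith : (0:ℝ) < -v) hrel
      rw [psi_even, psi_even] at this
      nlinarith [this]
    · -- c = 0 : direct sign argument
      subst hc0
      have hb0 : 0 < b := by linarith
      have h' : 0 ≤ b * psi 0 * (-v) :=
        mul_nonneg (mul_nonneg hb0.le (psi_pos 0).le) (by linarith)
      nlinarith [h']
    · -- c > 0, v < 0 : signs
      have hb0 : 0 < b := lt_of_lt_of_le hc0 hcb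
      have t1' : 0 ≤ b * psi c * (-v) :=
        mul_nonneg (mul_nonneg hb0.le (psi_pos c).le) (by linarith)
      have t2' : 0 ≤ c * psi b * (-v) :=
        mul_nonneg (mul_nonneg hc0.le (psi_pos b).le) (by linarith)
      have t3 : 0 ≤ b * c * psi v := (mul_pos (mul_pos hb0 hc0) (psi_pos v)).le
      nlinarith [t1', t2', t3]
  · -- v = 0 : then c > 0 and b > 0
    rw [hv0, Phi_zero] at h
    have hc0 : 0 < c := by
      by_contra hc0
      push_neg at hc0
      have h5 : Phi c ≤ Phi 0 := Phi_strictMono.monotone hc0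
      rw [Phi_zero] at h5
      nlinarith [Phi_lt_one b]
    have hb0 : 0 < b := lt_of_lt_of_le hc0 hcb
    rw [hv0]
    nlinarith [mul_pos (mul_pos hb0 hc0) (psi_pos 0)]
  · -- v > 0
    have hc0 : 0 < c := lt_of_lt_of_le hv0 hvc
    have hb0 : 0 < b := lt_of_lt_of_le hv0 hvb
    have := key11m hv0 hb0 hc0 h
    nlinarith [this]

lemma key10' {v b c : ℝ} (h : Phi v = Phi b + Phi c - 1) :
    b * v * psi c + c * v * psi b ≤ b * c * psi v := by
  rcases le_total c b with hcb | hbc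
  · exact key10'' h hcb
  · have h' : Phi v = Phi c + Phi b - 1 := by linarith
    have := key10'' h' hbc
    linarith

lemma key10 {a b v : ℝ} (h : Phi v = Phi b - Phi a) :
    a * b * psi v + b * v * psi a - a * v * psi b ≤ 0 := by
  have h' : Phi v = Phi b + Phi (-a) - 1 := by
    rw [Phi_neg]
    linarith
  have := key10' (v := v) (b := b) (c := -a) h'
  rw [psi_even] at this
  nlinarith [this]

lemma quad_nonneg {al ga be : ℝ} (hal : 0 ≤ al) (hga : 0 ≤ ga) (hd : be ^ 2 ≤ al * ga)
    (p q : ℝ) : 0 ≤ al * q ^ 2 + 2 * be * p * q + ga * p ^ 2 := by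
  rcases eq_or_lt_of_le hal with hal0 | hal0
  · have hbe : be = 0 := by nlinarith [sq_nonneg be]
    rw [← hal0, hbe]
    nlinarith [sq_nonneg p]
  · nlinarith [sq_nonneg (al * q + be * p), mul_nonneg (sub_nonneg.2 hd) (sq_nonneg p)]

lemma key9 {a b v : ℝ} (h : Phi v = Phi b - Phi a) (p q : ℝ) :
    psi v * (a * psi a * p ^ 2 - b * psi b * q ^ 2) + v * (psi b * q - psi a * p) ^ 2 ≤ 0 := by
  have hvb : v < b := by
    apply Phi_strictMono.lt_iff_lt.1
    rw [h]
    nlinarith [Phi_pos a]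
  have hav : a ≤ -v := by
    apply Phi_strictMono.le_iff_le.1
    rw [Phi_neg]
    linarith [Phi_lt_one b]
  have k1 : 0 ≤ b * psi v - v * psi b := by linarith [m_mono' hvb.le]
  have k2 : 0 ≤ (-a) * psi v - v * psi a := by
    have := m_mono' hav
    rw [psi_even] at this
    linarith
  have h10 := key10 h
  have hposf : 0 ≤ psi a * psi b * psi v :=
    (mul_pos (mul_pos (psi_pos a) (psi_pos b)) (psi_pos v)).le
  have hdisc : (v * psi a * psi b) ^ 2 ≤
      (psi b * (b * psi v - v * psi b)) * (psi a * ((-a) * psi v - v * psi a)) := by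
    have e : (psi b * (b * psi v - v * psi b)) * (psi a * ((-a) * psi v - v * psi a)) -
        (v * psi a * psi b) ^ 2 =
        (psi a * psi b * psi v) * (-(a * b * psi v + b * v * psi a - a * v * psi b)) := by
      ring
    nlinarith [mul_nonneg hposf
      (by linarith : (0:ℝ) ≤ -(a * b * psi v + b * v * psi a - a * v * psi b))]
  have hq := quad_nonneg (mul_nonneg (psi_pos b).le k1) (mul_nonneg (psi_pos a).le k2) hdisc p q
  nlinarith [hq]

lemma comb_pos {t1 t2 u w : ℝ} (h1 : 0 ≤ t1) (h2 : 0 ≤ t2) (hs : t1 + t2 = 1)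
    (hu : 0 < u) (hw : 0 < w) : 0 < t1 * u + t2 * w := by
  rcases eq_or_lt_of_le h1 with h | h
  · have : t2 = 1 := by linarith
    rw [← h, this]; linarith
  · nlinarith [mul_nonneg h2 hw.le]

lemma core {a₁ b₁ a₂ b₂ : ℝ} (h₁ : a₁ < b₁) (h₂ : a₂ < b₂) {l : ℝ}
    (hl0 : 0 ≤ l) (hl1 : l ≤ 1) :
    l * PhiInv (Phi b₁ - Phi a₁) + (1 - l) * PhiInv (Phi b₂ - Phi a₂) ≤
      PhiInv (Phi (l * b₁ + (1 - l) * b₂) - Phi (l * a₁ + (1 - l) * a₂)) := by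
  set da := a₁ - a₂ with hda
  set db := b₁ - b₂ with hdb
  set AA : ℝ → ℝ := fun t => a₂ + t * da with hAA
  set BB : ℝ → ℝ := fun t => b₂ + t * db with hBB
  set U : Set ℝ := {t : ℝ | AA t < BB t} with hU
  set P : ℝ → ℝ := fun t => Phi (BB t) - Phi (AA t) with hP
  set gg : ℝ → ℝ := fun t => PhiInv (P t) with hgg
  set N : ℝ → ℝ := fun t => psi (BB t) * db - psi (AA t) * da with hN
  set gg1 : ℝ → ℝ := fun t => (psi (gg t))⁻¹ * N t with hgg1
  -- membership of Icc 0 1 in U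
  have hIccU : Icc (0:ℝ) 1 ⊆ U := by
    intro t ht
    simp only [hU, hAA, hBB, mem_setOf_eq]
    have : 0 < t * (b₁ - a₁) + (1 - t) * (b₂ - a₂) :=
      comb_pos ht.1 (by linarith [ht.2]) (by ring) (by linarith) (by linarith)
    simp only [hda, hdb]
    nlinarith [this]
  -- U is open
  have hUopen : IsOpen U := by
    have : U = (fun t => BB t - AA t) ⁻¹' (Ioi 0) := by
      ext t; simp [hU, sub_pos, mem_setOf_eq]
    rw [this]
    apply IsOpen.preimage _ isOpen_Ioi
    apply Continuous.sub
    · exact continuous_const.add (continuous_id.mul continuous_const)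
    · exact continuous_const.add (continuous_id.mul continuous_const)
  -- U is convex
  have hUconv : Convex ℝ U := by
    intro x hx y hy t1 t2 ht1 ht2 hsum
    simp only [hU, hAA, hBB, mem_setOf_eq] at hx hy ⊢
    have hx' : 0 < (b₂ + x * db) - (a₂ + x * da) := by linarith
    have hy' : 0 < (b₂ + y * db) - (a₂ + y * da) := by linarith
    have := comb_pos ht1 ht2 hsum hx' hy'
    simp only [smul_eq_mul]
    nlinarith [this]
  have hUint : interior U = U := hUopen.interior_eq
  -- P maps U into Ioo 0 1
  have hPmem : ∀ t ∈ U, P t ∈ Ioo (0:ℝ) 1 := by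
    intro t ht
    simp only [hU, mem_setOf_eq] at ht
    constructor
    · simp only [hP]; linarith [Phi_strictMono ht]
    · simp only [hP]; linarith [Phi_lt_one (BB t), Phi_pos (AA t)]
  -- relation Phi (gg t) = P t on U
  have hPhigg : ∀ t ∈ U, Phi (gg t) = P t := fun t ht => Phi_PhiInv (hPmem t ht)
  -- derivatives of AA, BB
  have hAA' : ∀ t : ℝ, HasDerivAt AA da t := by
    intro t
    exact (((hasDerivAt_id t).mul_const da).const_add a₂).congr_deriv (one_mul da)
  have hBB' : ∀ t : ℝ, HasDerivAt BB db t := by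
    intro t
    exact (((hasDerivAt_id t).mul_const db).const_add b₂).congr_deriv (one_mul db)
  -- derivative of P
  have hP' : ∀ t : ℝ, HasDerivAt P (N t) t := by
    intro t
    have h1 : HasDerivAt (fun u => Phi (BB u)) (psi (BB t) * db) t :=
      (hasDerivAt_Phi (BB t)).comp t (hBB' t)
    have h2 : HasDerivAt (fun u => Phi (AA u)) (psi (AA t) * da) t :=
      (hasDerivAt_Phi (AA t)).comp t (hAA' t)
    exact h1.sub h2
  -- derivative of gg on U
  have hg' : ∀ t ∈ U, HasDerivAt gg (gg1 t) t := by
    intro t ht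
    have h1 := (hasDerivAt_PhiInv (hPmem t ht)).comp t (hP' t)
    exact h1
  -- derivative of N
  have hN' : ∀ t : ℝ, HasDerivAt N
      (-BB t * psi (BB t) * db * db - -AA t * psi (AA t) * da * da) t := by
    intro t
    have h1 : HasDerivAt (fun u => psi (BB u)) (-BB t * psi (BB t) * db) t :=
      (hasDerivAt_psi (BB t)).comp t (hBB' t)
    have h2 : HasDerivAt (fun u => psi (AA u)) (-AA t * psi (AA t) * da) t :=
      (hasDerivAt_psi (AA t)).comp t (hAA' t)
    exact (h1.mul_const db).sub (h2.mul_const da)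
  -- second derivative of gg on U
  set gg2 : ℝ → ℝ := fun t =>
    -(-gg t * psi (gg t) * gg1 t) / (psi (gg t)) ^ 2 * N t +
      (psi (gg t))⁻¹ * (-BB t * psi (BB t) * db * db - -AA t * psi (AA t) * da * da)
    with hgg2
  have hg'' : ∀ t ∈ U, HasDerivAt gg1 (gg2 t) t := by
    intro t ht
    have h1 : HasDerivAt (fun u => psi (gg u)) (-gg t * psi (gg t) * gg1 t) t :=
      (hasDerivAt_psi (gg t)).comp t (hg' t ht)
    have h2 := h1.inv (psi_pos (gg t)).ne'
    exact h2.mul (hN' t)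
  -- nonpositivity of gg2 on U
  have hgg2nonpos : ∀ t ∈ U, gg2 t ≤ 0 := by
    intro t ht
    have h9 := key9 (a := AA t) (b := BB t) (v := gg t) (by rw [hPhigg t ht]) da db
    have hpg := psi_pos (gg t)
    have hkey : (psi (gg t)) ^ 2 * gg2 t =
        psi (gg t) * (AA t * psi (AA t) * da ^ 2 - BB t * psi (BB t) * db ^ 2) +
          gg t * (psi (BB t) * db - psi (AA t) * da) ^ 2 := by
      simp only [hgg2, hgg1, hN]
      field_simp
      ring
    have h0 : (psi (gg t)) ^ 2 * gg2 t ≤ (psi (gg t)) ^ 2 * 0 := by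
      rw [mul_zero, hkey]
      nlinarith [h9]
    exact le_of_mul_le_mul_left h0 (by positivity)
  -- concavity
  have hconc : ConcaveOn ℝ U gg := by
    apply concaveOn_of_hasDerivWithinAt2_nonpos hUconv (f' := gg1) (f'' := gg2)
    · intro t ht
      exact (hg' t ht).continuousAt.continuousWithinAt
    · intro t ht
      rw [hUint] at ht
      exact (hg' t ht).hasDerivWithinAt
    · intro t ht
      rw [hUint] at ht
      exact (hg'' t ht).hasDerivWithinAt
    · intro t ht
      rw [hUint] at ht
      exact hgg2nonpos t ht
  -- apply concavity at points 1 and 0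
  have h1U : (1:ℝ) ∈ U := hIccU (by norm_num)
  have h0U : (0:ℝ) ∈ U := hIccU (by norm_num)
  have happ := hconc.2 h1U h0U hl0 (by linarith : (0:ℝ) ≤ 1 - l) (by ring)
  simp only [smul_eq_mul, mul_one, mul_zero, add_zero] at happ
  have e1 : gg 1 = PhiInv (Phi b₁ - Phi a₁) := by
    simp only [hgg, hP, hBB, hAA, hda, hdb]
    norm_num
  have e0 : gg 0 = PhiInv (Phi b₂ - Phi a₂) := by
    simp only [hgg, hP, hBB, hAA, hda, hdb]
    norm_num
  have el : gg l = PhiInv (Phi (l * b₁ + (1 - l) * b₂) - Phi (l * a₁ + (1 - l) * a₂)) := by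
    simp only [hgg, hP, hBB, hAA, hda, hdb]
    have eb : b₂ + l * (b₁ - b₂) = l * b₁ + (1 - l) * b₂ := by ring
    have ea : a₂ + l * (a₁ - a₂) = l * a₁ + (1 - l) * a₂ := by ring
    rw [eb, ea]
  rw [e1, e0, el] at happ
  exact happ

lemma convex_between {A : Set ℝ} (hc : Convex ℝ A) {x u w : ℝ} (hu : u ∈ A) (hw : w ∈ A)
    (h1 : u ≤ x) (h2 : x ≤ w) : x ∈ A :=
  hc.ordConnected.out hu hw ⟨h1, h2⟩

lemma gaussian1_Icc {a b : ℝ} (h : a ≤ b) :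
    gaussian1 (Set.Icc a b) = ENNReal.ofReal (Phi b - Phi a) := by
  rw [← gaussian1_Ioc h]
  apply le_antisymm _ (measure_mono Set.Ioc_subset_Icc_self)
  calc gaussian1 (Icc a b) ≤ gaussian1 (Ioc a b ∪ {a}) := by
        apply measure_mono; intro x hx
        rcases eq_or_lt_of_le hx.1 with h1 | h1
        · exact Or.inr (by simp [← h1])
        · exact Or.inl ⟨h1, hx.2⟩
    _ ≤ gaussian1 (Ioc a b) + gaussian1 {a} := measure_union_le _ _
    _ = gaussian1 (Ioc a b) := by rw [gaussian1_singleton, add_zero]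

lemma exists_two_points {A : Set ℝ} (h0 : gaussian1 A ≠ 0) :
    ∃ u ∈ A, ∃ w ∈ A, u < w := by
  by_contra hc
  push_neg at hc
  apply h0
  rcases Set.eq_empty_or_nonempty A with he | ⟨u, hu⟩
  · rw [he]; exact measure_empty
  have hsub : A ⊆ {u} := by
    intro w hw
    rcases lt_trichotomy u w with h | h | h
    · exact absurd h (by simpa using hc u hu w hw)
    · simp [← h]
    · exact absurd h (by simpa using hc w hw u hu)
  exact le_antisymm (le_trans (measure_mono hsub) (le_of_eq (gaussian1_singleton u))) zero_le

lemma gaussian1_convex_bdd {C : Set ℝ} (hconv : Convex ℝ C) (hne : C.Nonempty)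
    (hbb : BddBelow C) (hba : BddAbove C) :
    gaussian1 C = ENNReal.ofReal (Phi (sSup C) - Phi (sInf C)) := by
  have hab : sInf C ≤ sSup C := Real.sInf_le_sSup _ hbb hba
  apply le_antisymm
  · rw [← gaussian1_Icc hab]
    exact measure_mono fun x hx => ⟨csInf_le hbb hx, le_csSup hba hx⟩
  · rw [← gaussian1_Ioo hab]
    apply measure_mono
    intro x hx
    obtain ⟨u, hu, hux⟩ := exists_lt_of_csInf_lt hne hx.1
    obtain ⟨w, hw, hxw⟩ := exists_lt_of_lt_csSup hne hx.2
    exact convex_between hconv hu hw hux.le hxw.le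

lemma eq_univ_of_one_le {A : Set ℝ} (hconv : Convex ℝ A) (h1 : 1 ≤ gaussian1 A) :
    A = univ := by
  by_contra hne
  obtain ⟨x, hx⟩ := (ne_univ_iff_exists_notMem A).1 hne
  have hsplit : A ⊆ Iic x ∨ A ⊆ Ioi x := by
    by_contra hc
    push_neg at hc
    obtain ⟨h1c, h2c⟩ := hc
    obtain ⟨w, hw, hw2⟩ := not_subset.1 h1c
    obtain ⟨u, hu, hu2⟩ := not_subset.1 h2c
    simp only [mem_Iic, not_le, mem_Ioi, not_lt] at hw2 hu2
    exact hx (convex_between hconv hu hw hu2 hw2.le)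
  have hlt : gaussian1 A < 1 := by
    rcases hsplit with hs | hs
    · calc gaussian1 A ≤ gaussian1 (Iic x) := measure_mono hs
        _ = ENNReal.ofReal (Phi x) := gaussian1_Iic x
        _ < 1 := by
            rw [← ENNReal.ofReal_one]
            exact (ENNReal.ofReal_lt_ofReal_iff_of_nonneg (Phi_pos x).le).mpr (Phi_lt_one x)
    · calc gaussian1 A ≤ gaussian1 (Ioi x) := measure_mono hs
        _ < 1 := by
            have h2 : gaussian1 (Ioi x) = ENNReal.ofReal (1 - Phi x) := by
              rw [← gaussian1_Ioi_toReal x, ENNReal.ofReal_toReal (gaussian1_ne_top _)]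
            rw [h2, ← ENNReal.ofReal_one]
            apply (ENNReal.ofReal_lt_ofReal_iff_of_nonneg (by linarith [Phi_lt_one x])).mpr
            linarith [Phi_pos x]
  exact absurd h1 (not_le.2 hlt)

lemma mem_mink {A B : Set ℝ} {l u w : ℝ} (hu : u ∈ A) (hw : w ∈ B) :
    l * u + (1 - l) * w ∈ l • A + (1 - l) • B := by
  apply Set.add_mem_add
  · exact ⟨u, hu, rfl⟩
  · exact ⟨w, hw, rfl⟩

lemma Ioo_subset_mink {A B : Set ℝ} (hAconv : Convex ℝ A) (hBconv : Convex ℝ B)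
    {A' B' : Set ℝ} (hA' : A' ⊆ A) (hB' : B' ⊆ B) (hA'ne : A'.Nonempty) (hB'ne : B'.Nonempty)
    {l : ℝ} (hl0 : 0 < l) (hl1 : l < 1) :
    Ioo (l * sInf A' + (1 - l) * sInf B') (l * sSup A' + (1 - l) * sSup B') ⊆
      l • A + (1 - l) • B := by
  intro x hx
  have hSconv : Convex ℝ (l • A + (1 - l) • B) := (hAconv.smul l).add (hBconv.smul (1 - l))
  obtain ⟨hx1, hx2⟩ := hx
  set δ1 := x - (l * sInf A' + (1 - l) * sInf B') with hδ1
  have hδ1pos : 0 < δ1 := by simp only [hδ1]; linarith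
  obtain ⟨u1, hu1, hu1lt⟩ := exists_lt_of_csInf_lt hA'ne
    (lt_add_of_pos_right (sInf A') hδ1pos)
  obtain ⟨w1, hw1, hw1lt⟩ := exists_lt_of_csInf_lt hB'ne
    (lt_add_of_pos_right (sInf B') hδ1pos)
  set δ2 := (l * sSup A' + (1 - l) * sSup B') - x with hδ2
  have hδ2pos : 0 < δ2 := by simp only [hδ2]; linarith
  obtain ⟨u2, hu2, hu2lt⟩ := exists_lt_of_lt_csSup hA'ne
    (by linarith : sSup A' - δ2 < sSup A')
  obtain ⟨w2, hw2, hw2lt⟩ := exists_lt_of_lt_csSup hB'ne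
    (by linarith : sSup B' - δ2 < sSup B')
  have hs1 : l * u1 + (1 - l) * w1 ∈ l • A + (1 - l) • B := mem_mink (hA' hu1) (hB' hw1)
  have hs2 : l * u2 + (1 - l) * w2 ∈ l • A + (1 - l) • B := mem_mink (hA' hu2) (hB' hw2)
  apply convex_between hSconv hs1 hs2
  · nlinarith [mul_lt_mul_of_pos_left hu1lt hl0,
      mul_lt_mul_of_pos_left hw1lt (by linarith : (0:ℝ) < 1 - l)]
  · nlinarith [mul_lt_mul_of_pos_left hu2lt hl0,
      mul_lt_mul_of_pos_left hw2lt (by linarith : (0:ℝ) < 1 - l)]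

lemma ehrhard_main {A B : Set ℝ} (hAne : A.Nonempty) (hBne : B.Nonempty)
    (hAconv : Convex ℝ A) (hBconv : Convex ℝ B) {l : ℝ} (hl0 : 0 < l) (hl1 : l < 1)
    (hA0 : gaussian1 A ≠ 0) (hB0 : gaussian1 B ≠ 0)
    (hA1 : ¬ 1 ≤ gaussian1 A) (hB1 : ¬ 1 ≤ gaussian1 B) :
    ENNReal.ofReal (Phi (l * PhiInv (gaussian1 A).toReal +
      (1 - l) * PhiInv (gaussian1 B).toReal)) ≤ gaussian1 (l • A + (1 - l) • B) := by
  set S := l • A + (1 - l) • B with hS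
  set aa : ℕ → Set ℝ := fun n => A ∩ Icc (-(n:ℝ)) n with haa
  set bb : ℕ → Set ℝ := fun n => B ∩ Icc (-(n:ℝ)) n with hbb
  obtain ⟨uA, huA, wA, hwA, huwA⟩ := exists_two_points hA0
  obtain ⟨uB, huB, wB, hwB, huwB⟩ := exists_two_points hB0
  obtain ⟨n0, hn0⟩ := exists_nat_ge (max (max |uA| |wA|) (max |uB| |wB|))
  set vA : ℕ → ℝ := fun n => PhiInv ((gaussian1 (aa n)).toReal) with hvA
  set vB : ℕ → ℝ := fun n => PhiInv ((gaussian1 (bb n)).toReal) with hvB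
  -- eventual bound
  have hev : ∀ᶠ n in atTop, ENNReal.ofReal (Phi (l * vA n + (1 - l) * vB n)) ≤ gaussian1 S := by
    filter_upwards [eventually_ge_atTop n0] with n hn
    have hnn : (n0:ℝ) ≤ (n:ℝ) := Nat.cast_le.2 hn
    have hmem : ∀ y : ℝ, |y| ≤ max (max |uA| |wA|) (max |uB| |wB|) →
        y ∈ Icc (-(n:ℝ)) n := by
      intro y hy
      have : |y| ≤ (n:ℝ) := by linarith
      exact abs_le.1 this
    have huAn : uA ∈ aa n := ⟨huA, hmem uA (le_trans (le_max_left _ _) (le_max_left _ _))⟩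
    have hwAn : wA ∈ aa n := ⟨hwA, hmem wA (le_trans (le_max_right _ _) (le_max_left _ _))⟩
    have huBn : uB ∈ bb n := ⟨huB, hmem uB (le_trans (le_max_left _ _) (le_max_right _ _))⟩
    have hwBn : wB ∈ bb n := ⟨hwB, hmem wB (le_trans (le_max_right _ _) (le_max_right _ _))⟩
    have haane : (aa n).Nonempty := ⟨uA, huAn⟩
    have hbbne : (bb n).Nonempty := ⟨uB, huBn⟩
    have haabb : BddBelow (aa n) := bddBelow_Icc.mono inter_subset_right
    have haaba : BddAbove (aa n) := bddAbove_Icc.mono inter_subset_right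
    have hbbbb : BddBelow (bb n) := bddBelow_Icc.mono inter_subset_right
    have hbbba : BddAbove (bb n) := bddAbove_Icc.mono inter_subset_right
    have haaconv : Convex ℝ (aa n) := hAconv.inter (convex_Icc _ _)
    have hbbconv : Convex ℝ (bb n) := hBconv.inter (convex_Icc _ _)
    have hαβA : sInf (aa n) < sSup (aa n) :=
      lt_of_le_of_lt (csInf_le haabb huAn) (lt_of_lt_of_le huwA (le_csSup haaba hwAn))
    have hαβB : sInf (bb n) < sSup (bb n) :=
      lt_of_le_of_lt (csInf_le hbbbb huBn) (lt_of_lt_of_le huwB (le_csSup hbbba hwBn))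
    have hmA : gaussian1 (aa n) = ENNReal.ofReal (Phi (sSup (aa n)) - Phi (sInf (aa n))) :=
      gaussian1_convex_bdd haaconv haane haabb haaba
    have hmB : gaussian1 (bb n) = ENNReal.ofReal (Phi (sSup (bb n)) - Phi (sInf (bb n))) :=
      gaussian1_convex_bdd hbbconv hbbne hbbbb hbbba
    have htrA : (gaussian1 (aa n)).toReal = Phi (sSup (aa n)) - Phi (sInf (aa n)) := by
      rw [hmA, ENNReal.toReal_ofReal (by linarith [Phi_strictMono hαβA])]
    have htrB : (gaussian1 (bb n)).toReal = Phi (sSup (bb n)) - Phi (sInf (bb n)) := by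
      rw [hmB, ENNReal.toReal_ofReal (by linarith [Phi_strictMono hαβB])]
    have hcore := core hαβA hαβB hl0.le hl1.le
    have hcd : l * sInf (aa n) + (1 - l) * sInf (bb n) <
        l * sSup (aa n) + (1 - l) * sSup (bb n) := by
      nlinarith [mul_lt_mul_of_pos_left hαβA hl0,
        mul_lt_mul_of_pos_left hαβB (by linarith : (0:ℝ) < 1 - l)]
    set c := l * sInf (aa n) + (1 - l) * sInf (bb n) with hc
    set d := l * sSup (aa n) + (1 - l) * sSup (bb n) with hd
    have hQmem : Phi d - Phi c ∈ Ioo (0:ℝ) 1 := by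
      constructor
      · linarith [Phi_strictMono hcd]
      · linarith [Phi_lt_one d, Phi_pos c]
    have hstep : Phi (l * vA n + (1 - l) * vB n) ≤ Phi d - Phi c := by
      have h1 : l * vA n + (1 - l) * vB n ≤ PhiInv (Phi d - Phi c) := by
        simp only [hvA, hvB, htrA, htrB]
        exact hcore
      calc Phi (l * vA n + (1 - l) * vB n) ≤ Phi (PhiInv (Phi d - Phi c)) := Phi_monotone h1
        _ = Phi d - Phi c := Phi_PhiInv hQmem
    calc ENNReal.ofReal (Phi (l * vA n + (1 - l) * vB n))
        ≤ ENNReal.ofReal (Phi d - Phi c) := ENNReal.ofReal_le_ofReal hstep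
      _ = gaussian1 (Ioo c d) := (gaussian1_Ioo hcd.le).symm
      _ ≤ gaussian1 S := measure_mono (Ioo_subset_mink hAconv hBconv
          inter_subset_left inter_subset_left haane hbbne hl0 hl1)
  -- limits
  have hAmemIoo : (gaussian1 A).toReal ∈ Ioo (0:ℝ) 1 := by
    constructor
    · exact ENNReal.toReal_pos hA0 (gaussian1_ne_top A)
    · have := (ENNReal.toReal_lt_toReal (gaussian1_ne_top A) ENNReal.one_ne_top).2
        (not_le.1 hA1)
      simpa using this
  have hBmemIoo : (gaussian1 B).toReal ∈ Ioo (0:ℝ) 1 := by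
    constructor
    · exact ENNReal.toReal_pos hB0 (gaussian1_ne_top B)
    · have := (ENNReal.toReal_lt_toReal (gaussian1_ne_top B) ENNReal.one_ne_top).2
        (not_le.1 hB1)
      simpa using this
  have hUa : (⋃ n, aa n) = A := by
    apply Set.eq_of_subset_of_subset
    · exact Set.iUnion_subset fun n => inter_subset_left
    · intro x hx
      obtain ⟨n, hn⟩ := exists_nat_ge |x|
      exact Set.mem_iUnion.2 ⟨n, hx, abs_le.1 hn⟩
  have hUb : (⋃ n, bb n) = B := by
    apply Set.eq_of_subset_of_subset
    · exact Set.iUnion_subset fun n => inter_subset_left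
    · intro x hx
      obtain ⟨n, hn⟩ := exists_nat_ge |x|
      exact Set.mem_iUnion.2 ⟨n, hx, abs_le.1 hn⟩
  have hmono_a : Monotone aa := by
    intro m n hmn x hx
    refine ⟨hx.1, ?_, ?_⟩
    · have := hx.2.1; have hc : (m:ℝ) ≤ n := Nat.cast_le.2 hmn; linarith
    · have := hx.2.2; have hc : (m:ℝ) ≤ n := Nat.cast_le.2 hmn; linarith
  have hmono_b : Monotone bb := by
    intro m n hmn x hx
    refine ⟨hx.1, ?_, ?_⟩
    · have := hx.2.1; have hc : (m:ℝ) ≤ n := Nat.cast_le.2 hmn; linarith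
    · have := hx.2.2; have hc : (m:ℝ) ≤ n := Nat.cast_le.2 hmn; linarith
  have hta : Tendsto (fun n => gaussian1 (aa n)) atTop (nhds (gaussian1 A)) := by
    have := tendsto_measure_iUnion_atTop (μ := gaussian1) hmono_a
    rwa [hUa] at this
  have htb : Tendsto (fun n => gaussian1 (bb n)) atTop (nhds (gaussian1 B)) := by
    have := tendsto_measure_iUnion_atTop (μ := gaussian1) hmono_b
    rwa [hUb] at this
  have htra : Tendsto (fun n => (gaussian1 (aa n)).toReal) atTop
      (nhds ((gaussian1 A).toReal)) :=
    (ENNReal.tendsto_toReal (gaussian1_ne_top A)).comp hta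
  have htrb : Tendsto (fun n => (gaussian1 (bb n)).toReal) atTop
      (nhds ((gaussian1 B).toReal)) :=
    (ENNReal.tendsto_toReal (gaussian1_ne_top B)).comp htb
  have htva : Tendsto vA atTop (nhds (PhiInv (gaussian1 A).toReal)) :=
    (continuousAt_PhiInv hAmemIoo).tendsto.comp htra
  have htvb : Tendsto vB atTop (nhds (PhiInv (gaussian1 B).toReal)) :=
    (continuousAt_PhiInv hBmemIoo).tendsto.comp htrb
  have harg : Tendsto (fun n => Phi (l * vA n + (1 - l) * vB n)) atTop
      (nhds (Phi (l * PhiInv (gaussian1 A).toReal + (1 - l) * PhiInv (gaussian1 B).toReal))) :=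
    (Phi_continuous.tendsto _).comp ((htva.const_mul l).add (htvb.const_mul (1 - l)))
  have hofReal : Tendsto (fun n => ENNReal.ofReal (Phi (l * vA n + (1 - l) * vB n))) atTop
      (nhds (ENNReal.ofReal (Phi (l * PhiInv (gaussian1 A).toReal +
        (1 - l) * PhiInv (gaussian1 B).toReal)))) :=
    (ENNReal.continuous_ofReal.tendsto _).comp harg
  exact le_of_tendsto hofReal hev

lemma PhiInvE_zero : PhiInvE 0 = ⊥ := by rw [PhiInvE]; simp

lemma PhiInvE_one : PhiInvE 1 = ⊤ := by
  rw [PhiInvE, if_neg one_ne_zero, if_pos le_rfl]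

theorem stmt_16 (A B : Set ℝ) (hA : A.Nonempty) (hB : B.Nonempty)
    (hAconv : Convex ℝ A) (hBconv : Convex ℝ B)
    (hAm : MeasurableSet A) (hBm : MeasurableSet B)
    (l : ℝ) (hl0 : 0 ≤ l) (hl1 : l ≤ 1) :
    PhiInvE (gaussian1 (l • A + (1 - l) • B)) ≥
      (l : EReal) * PhiInvE (gaussian1 A) + ((1 - l : ℝ) : EReal) * PhiInvE (gaussian1 B) := by
  rw [ge_iff_le]
  by_cases hl0' : l = 0
  · subst hl0'
    have e1 : (0:ℝ) • A + (1 - 0 : ℝ) • B = B := by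
      rw [Set.zero_smul_set hA, sub_zero, one_smul, zero_add]
    rw [e1]
    simp only [sub_zero, EReal.coe_zero, zero_mul, EReal.coe_one, one_mul, zero_add, le_refl]
  by_cases hl1' : l = 1
  · subst hl1'
    have e1 : (1:ℝ) • A + (1 - 1 : ℝ) • B = A := by
      rw [sub_self, Set.zero_smul_set hB, one_smul, add_zero]
    rw [e1]
    simp only [sub_self, EReal.coe_zero, zero_mul, EReal.coe_one, one_mul, add_zero, le_refl]
  have hl0p : 0 < l := lt_of_le_of_ne hl0 (Ne.symm hl0')
  have hl1p : l < 1 := lt_of_le_of_ne hl1 hl1'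
  by_cases hA0 : gaussian1 A = 0
  · rw [hA0, PhiInvE_zero, EReal.coe_mul_bot_of_pos hl0p, EReal.bot_add]
    exact bot_le
  by_cases hB0 : gaussian1 B = 0
  · rw [hB0, PhiInvE_zero, EReal.coe_mul_bot_of_pos (by linarith : (0:ℝ) < 1 - l),
      EReal.add_bot]
    exact bot_le
  by_cases hA1 : 1 ≤ gaussian1 A
  · have hAuniv : A = univ := eq_univ_of_one_le hAconv hA1
    have hSuniv : l • A + (1 - l) • B = univ := by
      rw [hAuniv, smul_set_univ₀ (ne_of_gt hl0p)]
      apply Set.eq_univ_of_forall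
      intro x
      obtain ⟨b₀, hb₀⟩ := hB
      have := Set.add_mem_add (Set.mem_univ (x - (1 - l) * b₀))
        (Set.smul_mem_smul_set (a := (1 - l)) (b := b₀) hb₀)
      simpa using this
    rw [hSuniv, gaussian1_univ, PhiInvE_one]
    exact le_top
  by_cases hB1 : 1 ≤ gaussian1 B
  · have hBuniv : B = univ := eq_univ_of_one_le hBconv hB1
    have hSuniv : l • A + (1 - l) • B = univ := by
      rw [hBuniv, smul_set_univ₀ (ne_of_gt (by linarith : (0:ℝ) < 1 - l))]
      apply Set.eq_univ_of_forall
      intro x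
      obtain ⟨a₀, ha₀⟩ := hA
      have := Set.add_mem_add (Set.smul_mem_smul_set (a := l) (b := a₀) ha₀)
        (Set.mem_univ (x - l * a₀))
      simpa using this
    rw [hSuniv, gaussian1_univ, PhiInvE_one]
    exact le_top
  -- main case
  have hkey := ehrhard_main hA hB hAconv hBconv hl0p hl1p hA0 hB0 hA1 hB1
  set S := l • A + (1 - l) • B with hSdef
  set va := PhiInv (gaussian1 A).toReal with hva
  set vb := PhiInv (gaussian1 B).toReal with hvb
  have hS0 : gaussian1 S ≠ 0 := by
    intro h
    rw [h] at hkey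
    have := ENNReal.ofReal_pos.2 (Phi_pos (l * va + (1 - l) * vb))
    exact absurd (le_antisymm hkey zero_le) this.ne'
  have hRHS : (l : EReal) * PhiInvE (gaussian1 A) + ((1 - l : ℝ) : EReal) * PhiInvE (gaussian1 B)
      = ((l * va + (1 - l) * vb : ℝ) : EReal) := by
    rw [PhiInvE, if_neg hA0, if_neg hA1, PhiInvE, if_neg hB0, if_neg hB1,
      ← EReal.coe_mul, ← EReal.coe_mul, ← EReal.coe_add]
  rw [hRHS]
  by_cases hS1 : 1 ≤ gaussian1 S
  · rw [PhiInvE, if_neg hS0, if_pos hS1]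
    exact le_top
  · rw [PhiInvE, if_neg hS0, if_neg hS1]
    rw [EReal.coe_le_coe_iff]
    have h1 : Phi (l * va + (1 - l) * vb) ≤ (gaussian1 S).toReal :=
      (ENNReal.ofReal_le_iff_le_toReal (gaussian1_ne_top S)).1 hkey
    have hmemS : (gaussian1 S).toReal ∈ Ioo (0:ℝ) 1 := by
      constructor
      · exact lt_of_lt_of_le (Phi_pos _) h1
      · have := (ENNReal.toReal_lt_toReal (gaussian1_ne_top S) ENNReal.one_ne_top).2
          (not_le.1 hS1)
        simpa using this
    calc l * va + (1 - l) * vb = PhiInv (Phi (l * va + (1 - l) * vb)) :=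
          (PhiInv_Phi _).symm
      _ ≤ PhiInv (gaussian1 S).toReal :=
          PhiInv_le_PhiInv (Phi_mem_Ioo _) hmemS h1
end
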